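/- arXiv:1809.05432 — 9 statements merged into one kernel-verified Lean document; each statement's English description precedes it below -/
import Mathlib

section
/- If R is a finite ring with identity such that a^{|R|} = a for all a in R, then the natural map R → ∏_M R/M, where M ranges over all maximal ideals of R, is injective. -/
/-- If `R` is a finite commutative ring with identity such that `a ^ |R| = a` for all `a ∈ R`,
then the natural map `R → ∏_M R/M`, where `M` ranges over all maximal ideals of `R`,
is injective. -/
theorem carmichael_ring_map_injective (R : Type) [CommRing R] [Fintype R]
    (h : ∀ a : R, a ^ Fintype.card R = a) :
    Function.Injective
      (fun a : R => fun M : {I : Ideal R // I.IsMaximal} => Ideal.Quotient.mk M.1 a) := by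
  intro a b hab
  by_cases hcard : Fintype.card R ≤ 1
  · exact Subsingleton.elim (α := R) (h := Fintype.card_le_one_iff_subsingleton.mp hcard) a b
  push_neg at hcard
  set c := a - b with hc
  have hmem : ∀ M : Ideal R, M.IsMaximal → c ∈ M := by
    intro M hM
    have := congrFun hab ⟨M, hM⟩
    simp only at this
    have : Ideal.Quotient.mk M c = 0 := by
      simp [hc, map_sub, this]
    exact (Ideal.Quotient.eq_zero_iff_mem).mp this
  -- c ^ n = c with n = card R ≥ 2
  have hn : c ^ Fintype.card R = c := h c
  obtain ⟨m, hm⟩ : ∃ m, Fintype.card R = m + 1 + 1 := ⟨Fintype.card R - 2, by omega⟩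
  have hcc : c * c ^ (m + 1) = c := by
    rw [hm] at hn
    conv_rhs => rw [← hn]
    ring
  have key : c * (c ^ (m + 1) - 1) = 0 := by
    rw [mul_sub, hcc, mul_one, sub_self]
  have hunit : IsUnit (c ^ (m + 1) - 1) := by
    by_contra hu
    obtain ⟨M, hM, hmemM⟩ := exists_max_ideal_of_mem_nonunits (mem_nonunits_iff.mpr hu)
    have hcM := hmem M hM
    have hp : c ^ (m + 1) ∈ M := Ideal.pow_mem_of_mem M hcM _ (Nat.succ_pos m)
    have h1 : (1 : R) ∈ M := by
      have := M.sub_mem hp hmemM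
      simpa using this
    exact hM.ne_top (Ideal.eq_top_of_isUnit_mem M h1 isUnit_one)
  have hc0 : c = 0 := (hunit.mul_left_eq_zero).mp key
  linear_combination hc0
end

section
/- Let F_{q_1}, F_{q_2} be finite fields with q_1 ≠ q_2. Then the ring R = F_{q_1} × F_{q_2} is not a Carmichael ring; that is, there exists a ∈ R with a^{|R|} ≠ a. -/
lemma aux_not_carmichael (F₁ F₂ : Type) [Field F₁] [Field F₂]
    [Fintype F₁] [Fintype F₂] (hlt : Fintype.card F₂ < Fintype.card F₁) :
    ∃ a : F₁ × F₂, a ^ (Fintype.card F₁ * Fintype.card F₂) ≠ a := by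
  obtain ⟨g, hg⟩ := IsCyclic.exists_generator (α := F₁ˣ)
  have hord : orderOf g = Fintype.card F₁ - 1 := by
    haveI : DecidableEq F₁ := Classical.decEq _
    rw [orderOf_eq_card_of_forall_mem_zpowers hg, Nat.card_eq_fintype_card,
      Fintype.card_units]
  set N := Fintype.card F₁ * Fintype.card F₂ with hN
  have hq1 : 2 ≤ Fintype.card F₁ := Fintype.one_lt_card
  have hq2 : 2 ≤ Fintype.card F₂ := Fintype.one_lt_card
  have hN1 : 1 ≤ N := le_trans (by norm_num) (Nat.mul_le_mul hq1 hq2)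
  refine ⟨((g : F₁), 0), fun heq => ?_⟩
  have h1 : (g : F₁) ^ N = (g : F₁) := congrArg Prod.fst heq
  have h2 : g ^ N = g := Units.ext (by simpa using h1)
  have h3 : g ^ (N - 1) = 1 := by
    have : g ^ (N - 1) * g = g := by
      rw [← pow_succ, Nat.sub_add_cancel hN1, h2]
    exact mul_right_cancel (by rw [this, one_mul])
  have h4 : Fintype.card F₁ - 1 ∣ N - 1 := by
    rw [← hord]; exact orderOf_dvd_of_pow_eq_one h3
  have h5 : N - 1 = (Fintype.card F₁ - 1) * Fintype.card F₂ + (Fintype.card F₂ - 1) := by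
    have hm : (Fintype.card F₁ - 1) * Fintype.card F₂
        = Fintype.card F₁ * Fintype.card F₂ - Fintype.card F₂ := by rw [Nat.sub_mul, one_mul]
    have hPq : Fintype.card F₂ ≤ Fintype.card F₁ * Fintype.card F₂ :=
      Nat.le_mul_of_pos_left _ (by omega)
    rw [hN]; omega
  have h6 : Fintype.card F₁ - 1 ∣ Fintype.card F₂ - 1 := by
    have := (Nat.dvd_add_right ⟨Fintype.card F₂, rfl⟩).mp (h5 ▸ h4)
    exact this
  have h7 : Fintype.card F₁ - 1 ≤ Fintype.card F₂ - 1 :=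
    Nat.le_of_dvd (by omega) h6
  omega

/-- If `F₁`, `F₂` are finite fields with different cardinalities, then `F₁ × F₂` is not a
Carmichael ring: there is `a ∈ F₁ × F₂` with `a ^ |F₁ × F₂| ≠ a`. -/
theorem prod_two_fields_not_carmichael (F₁ F₂ : Type) [Field F₁] [Field F₂]
    [Fintype F₁] [Fintype F₂] (h : Fintype.card F₁ ≠ Fintype.card F₂) :
    ∃ a : F₁ × F₂, a ^ Fintype.card (F₁ × F₂) ≠ a := by
  rw [Fintype.card_prod]
  rcases h.lt_or_gt with hlt | hlt
  · obtain ⟨a, ha⟩ := aux_not_carmichael F₂ F₁ hlt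
    refine ⟨(a.2, a.1), fun heq => ha ?_⟩
    rw [mul_comm] at ha ⊢
    ext
    · exact congrArg Prod.snd heq
    · exact congrArg Prod.fst heq
  · exact aux_not_carmichael F₁ F₂ hlt
end

section
/- A squarefree, non-irreducible, nonconstant polynomial g ∈ F_q[t] satisfies f^{q^{deg g}} ≡ f (mod g) for all f ∈ F_q[t] if and only if for every monic irreducible factor P of g, deg P divides deg g. -/
open Polynomial

/-- If `q^d - 1 ∣ q^N - 1` with `q ≥ 2`, `d > 0`, then `d ∣ N`. -/
private theorem aux_dvd_of_pow_sub_one_dvd (q : ℕ) (hq : 2 ≤ q) :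
    ∀ N, ∀ d, 0 < d → (q ^ d - 1 ∣ q ^ N - 1) → d ∣ N := by
  intro N
  induction N using Nat.strong_induction_on with
  | _ N ih =>
    intro d hd h
    rcases Nat.lt_or_ge N d with hNd | hNd
    · rcases Nat.eq_zero_or_pos N with rfl | hN
      · exact dvd_zero d
      · exfalso
        have h2 : q ^ N < q ^ d := Nat.pow_lt_pow_right (by omega) hNd
        have hpos : 0 < q ^ N - 1 := by
          have : 2 ≤ q ^ N :=
            le_trans (by simpa using Nat.pow_le_pow_left hq 1)
              (Nat.pow_le_pow_right (by omega) hN)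
          omega
        have := Nat.le_of_dvd hpos h
        have h1 : 1 ≤ q ^ N := Nat.one_le_pow _ _ (by omega)
        omega
    · have hN : 0 < N := lt_of_lt_of_le hd hNd
      have h1 : 1 ≤ q ^ (N - d) := Nat.one_le_pow _ _ (by omega)
      have h2 : 1 ≤ q ^ d := Nat.one_le_pow _ _ (by omega)
      have hmul : q ^ (N - d) * q ^ d = q ^ N := by
        rw [← pow_add]; congr 1; omega
      have h3 : 1 ≤ q ^ N := Nat.one_le_pow _ _ (by omega)
      have hms : q ^ (N - d) * (q ^ d - 1) = q ^ N - q ^ (N - d) := by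
        rw [Nat.mul_sub, mul_one, hmul]
      have key : q ^ (N - d) - 1 = (q ^ N - 1) - q ^ (N - d) * (q ^ d - 1) := by
        have hle : q ^ (N - d) ≤ q ^ N := Nat.pow_le_pow_right (by omega) (by omega)
        rw [hms]; omega
      have hdvd' : q ^ d - 1 ∣ q ^ (N - d) - 1 := by
        rw [key]
        exact Nat.dvd_sub h (dvd_mul_left _ _)
      obtain ⟨k, hk⟩ : d ∣ N - d := ih (N - d) (by omega) d hd hdvd'
      exact ⟨k + 1, by rw [Nat.mul_succ]; omega⟩

/-- In a UFD, a squarefree element divides anything divisible by all its prime factors. -/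
private theorem squarefree_dvd_of_prime_dvd {R : Type*} [CommRing R] [IsDomain R]
    [NormalizationMonoid R] [UniqueFactorizationMonoid R] {g h : R} (hg : Squarefree g)
    (H : ∀ p : R, Prime p → p ∣ g → p ∣ h) : g ∣ h := by
  classical
  have hg0 : g ≠ 0 := hg.ne_zero
  have hassoc := UniqueFactorizationMonoid.prod_normalizedFactors hg0
  refine dvd_trans hassoc.symm.dvd ?_
  have hnodup : (UniqueFactorizationMonoid.normalizedFactors g).Nodup :=
    (UniqueFactorizationMonoid.squarefree_iff_nodup_normalizedFactors hg0).mp hg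
  refine Multiset.prod_primes_dvd h
    (fun a ha => UniqueFactorizationMonoid.prime_of_normalized_factor a ha)
    (fun a ha => H a (UniqueFactorizationMonoid.prime_of_normalized_factor a ha)
      (UniqueFactorizationMonoid.dvd_of_mem_normalizedFactors ha)) ?_
  intro a
  have heq : (UniqueFactorizationMonoid.normalizedFactors g).countP (Associated a) =
      (UniqueFactorizationMonoid.normalizedFactors g).countP (normalize a = ·) := by
    refine Multiset.countP_congr rfl ?_
    intro x hx
    have hxn : normalize x = x := UniqueFactorizationMonoid.normalize_normalized_factor x hx
    simp only [eq_iff_iff]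
    constructor
    · intro hax
      rw [← hxn]
      exact normalize_eq_normalize hax.dvd hax.symm.dvd
    · intro hxa
      rw [← hxa]
      exact associated_normalize a
  rw [heq]
  have := Multiset.nodup_iff_count_le_one.mp hnodup (normalize a)
  simpa [Multiset.count] using this

/-- Korselt's criterion for polynomials: a squarefree, non-irreducible, nonconstant
polynomial `g ∈ F_q[t]` satisfies `f ^ (q ^ deg g) ≡ f (mod g)` for all `f` if and only if
every monic irreducible factor of `g` has degree dividing `deg g`. -/
theorem korselt_criterion_poly (F : Type) [Field F] [Fintype F] (g : F[X])
    (hsf : Squarefree g) (hirr : ¬Irreducible g) (hdeg : 0 < g.natDegree) :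
    (∀ f : F[X], g ∣ f ^ (Fintype.card F ^ g.natDegree) - f) ↔
      ∀ P : F[X], P.Monic → Irreducible P → P ∣ g → P.natDegree ∣ g.natDegree := by
  classical
  set q := Fintype.card F with hq
  set N := g.natDegree with hN
  have hq2 : 2 ≤ q := Fintype.one_lt_card
  constructor
  · intro h P _hm hP hPg
    haveI : Fact (Irreducible P) := ⟨hP⟩
    set K := AdjoinRoot P
    have hd : 0 < P.natDegree := hP.natDegree_pos
    letI pb := AdjoinRoot.powerBasis hP.ne_zero
    letI : Fintype K := Module.fintypeOfFintype pb.basis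
    have hcard : Fintype.card K = q ^ P.natDegree := by
      rw [Module.card_eq_pow_finrank (K := F) (V := K), pb.finrank, AdjoinRoot.powerBasis_dim]
    -- every element of K satisfies a ^ q ^ N = a
    have hall : ∀ a : K, a ^ q ^ N = a := by
      intro a
      obtain ⟨f, rfl⟩ := AdjoinRoot.mk_surjective a
      have : AdjoinRoot.mk P (f ^ q ^ N - f) = 0 :=
        AdjoinRoot.mk_eq_zero.mpr (dvd_trans hPg (h f))
      have := sub_eq_zero.mp (by simpa using this)
      simpa using this
    -- take a generator of Kˣ
    obtain ⟨ζ, hζ⟩ := IsCyclic.exists_generator (α := Kˣ)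
    have hord : orderOf ζ = q ^ P.natDegree - 1 := by
      rw [orderOf_eq_card_of_forall_mem_zpowers hζ, Nat.card_eq_fintype_card, Fintype.card_units, hcard]
    have hpow1 : ζ ^ (q ^ N - 1) = 1 := by
      have h1 : 1 ≤ q ^ N := Nat.one_le_pow _ _ (by omega)
      have hz : (ζ : K) ^ q ^ N = (ζ : K) := hall ζ
      have : ζ ^ q ^ N = ζ := Units.ext (by push_cast [hz]; rfl)
      have h2 : ζ ^ (q ^ N - 1) * ζ = ζ := by
        rw [← pow_succ]
        rw [Nat.sub_add_cancel h1] at *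
        exact this
      calc ζ ^ (q ^ N - 1) = ζ ^ (q ^ N - 1) * ζ * ζ⁻¹ := by group
      _ = ζ * ζ⁻¹ := by rw [h2]
      _ = 1 := mul_inv_cancel ζ
    have hdvd : q ^ P.natDegree - 1 ∣ q ^ N - 1 := by
      rw [← hord]; exact orderOf_dvd_of_pow_eq_one hpow1
    exact aux_dvd_of_pow_sub_one_dvd q hq2 N P.natDegree hd hdvd
  · intro h f
    refine squarefree_dvd_of_prime_dvd hsf ?_
    intro p hp hpg
    have hp0 : p ≠ 0 := hp.ne_zero
    set P := normalize p with hP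
    have hPassoc : Associated p P := associated_normalize p
    have hPm : P.Monic := monic_normalize hp0
    have hPirr : Irreducible P := hPassoc.irreducible hp.irreducible
    have hPg : P ∣ g := hPassoc.symm.dvd.trans hpg
    have hPdeg : P.natDegree = p.natDegree :=
      natDegree_eq_of_degree_eq (degree_normalize (p := p))
    obtain ⟨m, hm⟩ := h P hPm hPirr hPg
    -- work in AdjoinRoot P
    haveI : Fact (Irreducible P) := ⟨hPirr⟩
    set K := AdjoinRoot P
    letI pb := AdjoinRoot.powerBasis hPirr.ne_zero
    letI : Fintype K := Module.fintypeOfFintype pb.basis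
    have hcard : Fintype.card K = q ^ P.natDegree := by
      rw [Module.card_eq_pow_finrank (K := F) (V := K), pb.finrank, AdjoinRoot.powerBasis_dim]
    have key : AdjoinRoot.mk P (f ^ q ^ N - f) = 0 := by
      rw [map_sub, map_pow]
      have : (AdjoinRoot.mk P f) ^ q ^ N = AdjoinRoot.mk P f := by
        have : q ^ N = Fintype.card K ^ m := by
          rw [hcard, ← pow_mul, ← hm]
        rw [this]
        exact FiniteField.pow_card_pow m _
      rw [this, sub_self]
    have : P ∣ f ^ q ^ N - f := AdjoinRoot.mk_eq_zero.mp key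
    exact hPassoc.dvd.trans this
end

section
/- For prime powers q and positive integers m, n with m < n (and if q = 2 or q = 3, additionally m ≥ 2), the number of monic irreducible polynomials of degree m over F_q is strictly less than the number of monic irreducible polynomials of degree n over F_q. -/
open Polynomial Finset

variable {F : Type} [Field F] [Fintype F]

lemma Sfin (d : ℕ) : {p : F[X] | p.Monic ∧ Irreducible p ∧ p.natDegree = d}.Finite := by
  apply Set.Finite.of_finite_image (f := fun p => fun i : Fin (d+1) => p.coeff i)
  · exact Set.toFinite _
  · intro p hp r hr h
    ext i
    by_cases hi : i ≤ d
    · have := congrFun h ⟨i, by omega⟩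
      simpa using this
    · rw [coeff_eq_zero_of_natDegree_lt (by rw [hp.2.2]; omega),
        coeff_eq_zero_of_natDegree_lt (by rw [hr.2.2]; omega)]

lemma dvd_X_pow_card_pow_sub_X {k : ℕ} (hk : 0 < k) {π : F[X]} (hπ : π.Monic)
    (hirr : Irreducible π) (hdvd : π.natDegree ∣ k) :
    π ∣ (X ^ (Fintype.card F) ^ k - X) := by
  haveI := Fact.mk hirr
  set K := AdjoinRoot π
  haveI : FiniteDimensional F K := PowerBasis.finite (AdjoinRoot.powerBasis hirr.ne_zero)
  haveI : Finite K := Module.finite_of_finite F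
  haveI : Fintype K := Fintype.ofFinite K
  have hcard : Fintype.card K = Fintype.card F ^ π.natDegree := by
    rw [Module.card_eq_pow_finrank (K := F) (V := K)]
    congr 1
    rw [← AdjoinRoot.powerBasis_dim hirr.ne_zero, PowerBasis.finrank]
  obtain ⟨e, rfl⟩ := hdvd
  set t := AdjoinRoot.root π
  have ht : t ^ (Fintype.card F) ^ (π.natDegree * e) = t := by
    rw [pow_mul, ← hcard]
    exact FiniteField.pow_card_pow e t
  have hev : (Polynomial.aeval t) ((X : F[X]) ^ (Fintype.card F) ^ (π.natDegree * e) - X) = 0 := by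
    simp [ht]
  have := minpoly.dvd F t hev
  rwa [AdjoinRoot.minpoly_root hirr.ne_zero, hπ.leadingCoeff, inv_one, map_one, mul_one] at this



lemma sum_deg_le (k : ℕ) (hk : 0 < k) (T : Finset F[X])
    (hT : ∀ π ∈ T, π.Monic ∧ Irreducible π ∧ π.natDegree ∣ k)
    (hdvd : ∀ π ∈ T, π ∣ ((X : F[X]) ^ (Fintype.card F) ^ k - X)) :
    ∑ π ∈ T, π.natDegree ≤ (Fintype.card F) ^ k := by
  have hq : 1 < (Fintype.card F) ^ k := Nat.one_lt_pow hk.ne' Fintype.one_lt_card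
  have hne : ((X : F[X]) ^ (Fintype.card F) ^ k - X) ≠ 0 :=
    FiniteField.X_pow_card_sub_X_ne_zero F hq
  have hprod : (∏ π ∈ T, π) ∣ ((X : F[X]) ^ (Fintype.card F) ^ k - X) := by
    apply Finset.prod_dvd_of_coprime
    · intro π hπ ρ hρ hne
      simp only [Function.onFun, id]
      rw [(hT π hπ).2.1.coprime_iff_not_dvd]
      intro hd
      exact hne (Polynomial.eq_of_monic_of_associated (hT π hπ).1 (hT ρ hρ).1
        ((hT π hπ).2.1.associated_of_dvd (hT ρ hρ).2.1 hd))
    · exact fun π hπ => hdvd π hπ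
  calc ∑ π ∈ T, π.natDegree = (∏ π ∈ T, π).natDegree :=
        (natDegree_prod_of_monic _ _ fun π hπ => (hT π hπ).1).symm
    _ ≤ ((X : F[X]) ^ (Fintype.card F) ^ k - X).natDegree := natDegree_le_of_dvd hprod hne
    _ = (Fintype.card F) ^ k := FiniteField.X_pow_card_sub_X_natDegree_eq F hq



lemma exists_frobenius_subalgebra {F E : Type} [Field F] [Fintype F] [Field E] [Algebra F E]
    (n p : ℕ) (k : ℕ+) [Fact p.Prime] [CharP E p] (hcard : Fintype.card F = p ^ (k:ℕ)) :
    ∃ A : Subalgebra F E, ∀ x : E, x ∈ A ↔ x ^ (Fintype.card F) ^ n = x := by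
  have hqn : (Fintype.card F) ^ n = p ^ ((k : ℕ) * n) := by rw [pow_mul, ← hcard]
  refine ⟨{ carrier := {x : E | x ^ (Fintype.card F) ^ n = x}
            mul_mem' := ?_, one_mem' := ?_, add_mem' := ?_, zero_mem' := ?_
            algebraMap_mem' := ?_ }, fun x => Iff.rfl⟩
  · intro a b ha hb
    simp only [Set.mem_setOf_eq] at ha hb ⊢
    rw [mul_pow, ha, hb]
  · simp
  · intro a b ha hb
    simp only [Set.mem_setOf_eq] at ha hb ⊢
    rw [hqn] at ha hb ⊢
    rw [add_pow_char_pow, ha, hb]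
  · simp [ne_of_gt (pow_pos Fintype.card_pos n)]
  · intro a
    simp only [Set.mem_setOf_eq]
    rw [← map_pow, FiniteField.pow_card_pow]

variable {F : Type} [Field F] [Fintype F]

lemma card_splitting (n : ℕ) (hn : 0 < n) :
    Nat.card ((X ^ (Fintype.card F) ^ n - X : F[X]).SplittingField)
      = (Fintype.card F) ^ n := by
  set q := Fintype.card F with hqdef
  set f : F[X] := X ^ q ^ n - X with hfdef
  set E := f.SplittingField with hEdef
  haveI : Finite E := Module.finite_of_finite F
  haveI : Fintype E := Fintype.ofFinite E
  have hq1 : 1 < q ^ n := Nat.one_lt_pow hn.ne' Fintype.one_lt_card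
  set p := ringChar F with hpdef
  haveI hp : Fact p.Prime := ⟨CharP.char_is_prime F p⟩
  obtain ⟨k, hpk, hcard⟩ := FiniteField.card F p
  haveI : CharP E p := charP_of_injective_algebraMap (algebraMap F E).injective p
  have hpq : p ∣ q := by
    rw [show q = p ^ (k : ℕ) from hcard]
    exact dvd_pow_self p k.ne_zero
  have hpd : p ∣ q ^ n := hpq.trans (dvd_pow_self q hn.ne')
  obtain ⟨A, hA⟩ := exists_frobenius_subalgebra (E := E) n p k hcard
  have key : ∀ x : E, x ^ q ^ n = x := by
    have hroot : f.rootSet E ⊆ A := by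
      intro x hx
      rw [Polynomial.mem_rootSet] at hx
      have h2 : x ^ q ^ n - x = 0 := by simpa [hfdef] using hx.2
      rw [SetLike.mem_coe, hA]
      rwa [sub_eq_zero] at h2
    have htop : (⊤ : Subalgebra F E) ≤ A := by
      rw [← Polynomial.SplittingField.adjoin_rootSet f]
      exact Algebra.adjoin_le hroot
    exact fun x => (hA x).mp (htop (Algebra.mem_top (R := F)))
  have hfe : f.map (algebraMap F E) = (X ^ q ^ n - X : E[X]) := by
    simp [hfdef]
  have hsep : (X ^ q ^ n - X : E[X]).Separable := galois_poly_separable p (q ^ n) hpd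
  have hg0 : (X ^ q ^ n - X : E[X]) ≠ 0 := FiniteField.X_pow_card_sub_X_ne_zero E hq1
  have hnodup : (X ^ q ^ n - X : E[X]).roots.Nodup := nodup_roots hsep
  classical
  have huniv : (X ^ q ^ n - X : E[X]).roots.toFinset = Finset.univ := by
    rw [eq_univ_iff_forall]
    intro x
    rw [Multiset.mem_toFinset, mem_roots hg0, IsRoot.def]
    simp [key x]
  have hcardroots : Multiset.card (X ^ q ^ n - X : E[X]).roots = Fintype.card E := by
    rw [← Multiset.toFinset_card_of_nodup hnodup, huniv, card_univ]
  have hsplits : (X ^ q ^ n - X : E[X]).Splits := by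
    rw [← hfe]
    exact SplittingField.splits f
  have hdeg : Multiset.card (X ^ q ^ n - X : E[X]).roots = q ^ n := by
    rw [(splits_iff_card_roots).mp hsplits, FiniteField.X_pow_card_sub_X_natDegree_eq E hq1]
  show Nat.card E = q ^ n
  rw [Nat.card_eq_fintype_card, ← hcardroots]
  exact hdeg

noncomputable def SF (F : Type) [Field F] [Fintype F] (d : ℕ) : Finset F[X] :=
  (Sfin (F := F) d).toFinset

lemma mem_SF {d : ℕ} {p : F[X]} :
    p ∈ SF F d ↔ p.Monic ∧ Irreducible p ∧ p.natDegree = d := by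
  simp [SF, Set.Finite.mem_toFinset, Set.mem_setOf_eq]

lemma q_le_card_SF_one : Fintype.card F ≤ (SF F 1).card := by
  classical
  have himg : (Finset.univ.image fun a : F => X - C a) ⊆ SF F 1 := by
    intro p hp
    simp only [mem_image] at hp
    obtain ⟨a, _, rfl⟩ := hp
    exact mem_SF.mpr ⟨monic_X_sub_C a, irreducible_X_sub_C a, natDegree_X_sub_C a⟩
  calc Fintype.card F = (Finset.univ : Finset F).card := (card_univ).symm
    _ = (Finset.univ.image fun a : F => X - C a).card := by
        rw [Finset.card_image_of_injective]
        intro a b hab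
        have := congrArg (fun p => coeff p 0) hab
        simpa using this
    _ ≤ (SF F 1).card := Finset.card_le_card himg

lemma sum_natDegree_SF (d : ℕ) : ∑ π ∈ SF F d, π.natDegree = d * (SF F d).card := by
  rw [Finset.sum_congr rfl (fun π hπ => (mem_SF.mp hπ).2.2), Finset.sum_const, smul_eq_mul,
    mul_comm]

lemma L1w (d : ℕ) (hd : 0 < d) :
    d * (SF F d).card ≤ (Fintype.card F) ^ d := by
  rw [← sum_natDegree_SF]
  exact sum_deg_le d hd _ (fun π hπ => ⟨(mem_SF.mp hπ).1, (mem_SF.mp hπ).2.1,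
      (mem_SF.mp hπ).2.2 ▸ dvd_rfl⟩)
    (fun π hπ => dvd_X_pow_card_pow_sub_X hd (mem_SF.mp hπ).1 (mem_SF.mp hπ).2.1
      ((mem_SF.mp hπ).2.2 ▸ dvd_rfl))

lemma L1s (m : ℕ) (hm : 2 ≤ m) :
    m * (SF F m).card + Fintype.card F ≤ (Fintype.card F) ^ m := by
  classical
  have hdisj : Disjoint (SF F m) (SF F 1) := by
    rw [Finset.disjoint_left]
    intro π h1 h2
    have := (mem_SF.mp h1).2.2
    have := (mem_SF.mp h2).2.2
    omega
  have hm0 : 0 < m := by omega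
  have hsum : ∑ π ∈ SF F m ∪ SF F 1, π.natDegree ≤ (Fintype.card F) ^ m := by
    apply sum_deg_le m hm0
    · intro π hπ
      rcases Finset.mem_union.mp hπ with h | h
      · exact ⟨(mem_SF.mp h).1, (mem_SF.mp h).2.1, (mem_SF.mp h).2.2 ▸ dvd_rfl⟩
      · exact ⟨(mem_SF.mp h).1, (mem_SF.mp h).2.1, (mem_SF.mp h).2.2 ▸ one_dvd m⟩
    · intro π hπ
      rcases Finset.mem_union.mp hπ with h | h
      · exact dvd_X_pow_card_pow_sub_X hm0 (mem_SF.mp h).1 (mem_SF.mp h).2.1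
          ((mem_SF.mp h).2.2 ▸ dvd_rfl)
      · exact dvd_X_pow_card_pow_sub_X hm0 (mem_SF.mp h).1 (mem_SF.mp h).2.1
          ((mem_SF.mp h).2.2 ▸ one_dvd m)
  rw [Finset.sum_union hdisj, sum_natDegree_SF, sum_natDegree_SF, one_mul] at hsum
  have := q_le_card_SF_one (F := F)
  omega
section L2
variable {F : Type} [Field F] [Fintype F]

lemma L2 (n : ℕ) (hn : 0 < n) :
    (Fintype.card F) ^ n ≤ n * (SF F n).card + ∑ d ∈ Finset.Icc 1 (n / 2), (Fintype.card F) ^ d := by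
  classical
  set q := Fintype.card F with hqdef
  set f : F[X] := X ^ q ^ n - X with hfdef
  set E := f.SplittingField with hEdef
  haveI : Finite E := Module.finite_of_finite F
  haveI : Fintype E := Fintype.ofFinite E
  have hcardE : Fintype.card E = q ^ n := by
    rw [← Nat.card_eq_fintype_card]
    exact card_splitting n hn
  have hrank : Module.finrank F E = n := by
    have h1 : Fintype.card E = q ^ Module.finrank F E := Module.card_eq_pow_finrank
    rw [hcardE] at h1
    exact (Nat.pow_right_injective Fintype.one_lt_card h1.symm)
  have hint : ∀ α : E, IsIntegral F α := fun α => IsIntegral.of_finite F α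
  set φ : E → F[X] := fun α => minpoly F α with hφdef
  have hcount : Fintype.card E
      = ∑ π ∈ Finset.univ.image φ, (Finset.univ.filter fun α => φ α = π).card := by
    rw [← Finset.card_univ]
    exact Finset.card_eq_sum_card_image φ Finset.univ
  have hfiber : ∀ π ∈ Finset.univ.image φ,
      (Finset.univ.filter fun α => φ α = π).card ≤ π.natDegree := by
    intro π hπ
    have hsub : (Finset.univ.filter fun α => φ α = π)
        ⊆ (π.map (algebraMap F E)).roots.toFinset := by
      intro α hα
      have hα' : minpoly F α = π := (Finset.mem_filter.mp hα).2
      have hπ0 : π ≠ 0 := hα' ▸ minpoly.ne_zero (hint α)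
      rw [Multiset.mem_toFinset, Polynomial.mem_roots, Polynomial.IsRoot.def,
        Polynomial.eval_map, ← Polynomial.aeval_def, ← hα']
      · exact minpoly.aeval F α
      · exact Polynomial.map_ne_zero hπ0
    calc (Finset.univ.filter fun α => φ α = π).card
        ≤ (π.map (algebraMap F E)).roots.toFinset.card := Finset.card_le_card hsub
      _ ≤ Multiset.card (π.map (algebraMap F E)).roots := Multiset.toFinset_card_le _
      _ ≤ (π.map (algebraMap F E)).natDegree := Polynomial.card_roots' _
      _ = π.natDegree := Polynomial.natDegree_map _
  have himg : Finset.univ.image φ ⊆ n.divisors.biUnion (fun d => SF F d) := by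
    intro π hπ
    obtain ⟨α, -, rfl⟩ := Finset.mem_image.mp hπ
    apply Finset.mem_biUnion.mpr
    refine ⟨(minpoly F α).natDegree, ?_, ?_⟩
    · rw [Nat.mem_divisors]
      exact ⟨hrank ▸ minpoly.degree_dvd (hint α), hn.ne'⟩
    · exact mem_SF.mpr ⟨minpoly.monic (hint α), minpoly.irreducible (hint α), rfl⟩
  have hdisjSF : ∀ d₁ ∈ n.divisors, ∀ d₂ ∈ n.divisors, d₁ ≠ d₂ →
      Disjoint (SF F d₁) (SF F d₂) := by
    intro d₁ _ d₂ _ hne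
    rw [Finset.disjoint_left]
    intro π h1 h2
    exact hne ((mem_SF.mp h1).2.2 ▸ (mem_SF.mp h2).2.2)
  have step1 : q ^ n ≤ ∑ d ∈ n.divisors, d * (SF F d).card := by
    calc q ^ n = Fintype.card E := hcardE.symm
      _ = ∑ π ∈ Finset.univ.image φ, (Finset.univ.filter fun α => φ α = π).card := hcount
      _ ≤ ∑ π ∈ Finset.univ.image φ, π.natDegree := Finset.sum_le_sum hfiber
      _ ≤ ∑ π ∈ n.divisors.biUnion (fun d => SF F d), π.natDegree :=
          Finset.sum_le_sum_of_subset himg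
      _ = ∑ d ∈ n.divisors, ∑ π ∈ SF F d, π.natDegree := Finset.sum_biUnion hdisjSF
      _ = ∑ d ∈ n.divisors, d * (SF F d).card := by
          exact Finset.sum_congr rfl fun d _ => sum_natDegree_SF d
  have hmem : n ∈ n.divisors := Nat.mem_divisors_self n hn.ne'
  rw [← Finset.add_sum_erase _ _ hmem] at step1
  have step2 : ∑ d ∈ n.divisors.erase n, d * (SF F d).card
      ≤ ∑ d ∈ Finset.Icc 1 (n / 2), q ^ d := by
    have hsub : n.divisors.erase n ⊆ Finset.Icc 1 (n / 2) := by
      intro d hd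
      have hdn : d ∣ n := (Nat.mem_divisors.mp (Finset.mem_of_mem_erase hd)).1
      have hne : d ≠ n := Finset.ne_of_mem_erase hd
      obtain ⟨e, rfl⟩ := hdn
      have he : 2 ≤ e := by
        rcases Nat.lt_or_ge e 2 with h | h
        · interval_cases e <;> simp_all <;> omega
        · exact h
      have hd0 : 0 < d := Nat.pos_of_mem_divisors (Finset.mem_of_mem_erase hd)
      rw [Finset.mem_Icc]
      refine ⟨by omega, ?_⟩
      rw [Nat.le_div_iff_mul_le (by norm_num : 0 < 2)]
      calc d * 2 ≤ d * e := Nat.mul_le_mul_left d he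
        _ = d * e := rfl
    calc ∑ d ∈ n.divisors.erase n, d * (SF F d).card
        ≤ ∑ d ∈ n.divisors.erase n, q ^ d := by
          apply Finset.sum_le_sum
          intro d hd
          have hd1 : 1 ≤ d := Nat.pos_of_mem_divisors (Finset.mem_of_mem_erase hd)
          exact L1w d hd1
      _ ≤ ∑ d ∈ Finset.Icc 1 (n / 2), q ^ d := Finset.sum_le_sum_of_subset hsub
  exact step1.trans (Nat.add_le_add_left step2 _)

end L2

section Arith
open Finset


lemma G_bound (q : ℕ) (hq : 2 ≤ q) (s : ℕ) :
    (∑ d ∈ Icc 1 s, q ^ d) + q ≤ q ^ (s + 1) := by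
  induction s with
  | zero => simp
  | succ s ih =>
      rw [Finset.sum_Icc_succ_top (by omega : 1 ≤ s + 1)]
      have h1 : q ^ (s + 1) + q ^ (s + 1) ≤ q ^ (s + 1 + 1) := by
        have h2 : q ^ (s + 1 + 1) = q * q ^ (s + 1) := by ring
        nlinarith [pow_pos (by omega : 0 < q) (s + 1)]
      omega

lemma Mon (q : ℕ) (hq : 2 ≤ q) (m : ℕ) (hm : 1 ≤ m) :
    ∀ j, m ≤ j → j * q ^ m + m * q ≤ m * q ^ j + j * q := by
  intro j
  induction j with
  | zero => intro h; interval_cases m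
  | succ j ih =>
      intro hmj
      rcases Nat.lt_or_ge m (j + 1) with h | h
      · have hmj' : m ≤ j := by omega
        have H := ih (by omega)
        have hpw : q ^ m ≤ q ^ j := Nat.pow_le_pow_right (by omega) hmj'
        have key : m * q ^ j + q ^ j ≤ m * q ^ (j + 1) := by
          have h2 : q ^ (j + 1) = q * q ^ j := by ring
          calc m * q ^ j + q ^ j = (m + 1) * q ^ j := by ring
            _ ≤ (2 * m) * q ^ j := Nat.mul_le_mul_right _ (by omega)
            _ = m * (2 * q ^ j) := by ring
            _ ≤ m * (q * q ^ j) := Nat.mul_le_mul_left m (Nat.mul_le_mul_right _ hq)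
            _ = m * q ^ (j + 1) := by rw [h2]
        have expand : (j + 1) * q ^ m = j * q ^ m + q ^ m := by ring
        rw [expand]
        linarith
      · have : m = j + 1 := by omega
        subst this
        omega

lemma B_ineq (q : ℕ) (hq : 2 ≤ q) (j : ℕ) (hj : 2 ≤ j) :
    (j + 1) * q ^ j + j * q ^ ((j + 1) / 2 + 1) ≤ j * q ^ (j + 1) + (j + 1) * q := by
  obtain ⟨t, rfl⟩ : ∃ t, q = t + 2 := ⟨q - 2, by omega⟩
  rcases Nat.lt_or_ge j 4 with h4 | h4
  · interval_cases j
    · norm_num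
      ring_nf
      nlinarith [t.zero_le, sq_nonneg t, pow_nonneg t.zero_le 3]
    · norm_num
      ring_nf
      nlinarith [t.zero_le, sq_nonneg t, pow_nonneg t.zero_le 3, pow_nonneg t.zero_le 4]
  · obtain ⟨r, rfl⟩ : ∃ r, j = r + 1 := ⟨j - 1, by omega⟩
    have hr : 3 ≤ r := by omega
    set q := t + 2 with hqdef
    have hs : (r + 1 + 1) / 2 + 1 ≤ r := by omega
    have hsp : q ^ ((r + 1 + 1) / 2 + 1) ≤ q ^ r := Nat.pow_le_pow_right (by omega) hs
    have hX1 : 1 ≤ q ^ r := Nat.one_le_pow _ _ (by omega)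
    have hcoef : (r + 2) * q + (r + 1) ≤ (r + 1) * q * q := by
      rw [hqdef]
      nlinarith [mul_nonneg (Nat.zero_le r) (Nat.zero_le (t * t)),
        mul_nonneg (Nat.zero_le r) (Nat.zero_le t), hr]
    have h1 : q ^ (r + 1) = q * q ^ r := by ring
    have h2 : q ^ (r + 1 + 1) = q * q * q ^ r := by ring
    calc (r + 1 + 1) * q ^ (r + 1) + (r + 1) * q ^ ((r + 1 + 1) / 2 + 1)
        ≤ (r + 1 + 1) * q ^ (r + 1) + (r + 1) * q ^ r :=
          Nat.add_le_add_left (Nat.mul_le_mul_left _ hsp) _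
      _ = ((r + 2) * q + (r + 1)) * q ^ r := by rw [h1]; ring
      _ ≤ ((r + 1) * q * q) * q ^ r := Nat.mul_le_mul_right _ hcoef
      _ = (r + 1) * q ^ (r + 1 + 1) := by rw [h2]; ring
      _ ≤ (r + 1) * q ^ (r + 1 + 1) + (r + 1 + 1) * q := Nat.le_add_right _ _

end Arith
section Final
open Polynomial Finset
variable {F : Type} [Field F] [Fintype F]

lemma Ncard_eq (d : ℕ) :
    Nat.card {p : F[X] // p.Monic ∧ Irreducible p ∧ p.natDegree = d} = (SF F d).card := by
  have h1 : Nat.card {p : F[X] // p.Monic ∧ Irreducible p ∧ p.natDegree = d}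
      = Nat.card {p : F[X] | p.Monic ∧ Irreducible p ∧ p.natDegree = d} := rfl
  rw [h1, Nat.card_coe_set_eq, Set.ncard_eq_toFinset_card _ (Sfin d)]
  rfl

/-- Monotonicity of the count of monic irreducible polynomials: for a finite field `F` of
cardinality `q` and `m < n` (with additionally `2 ≤ m` if `q = 2` or `q = 3`), the number of
monic irreducible polynomials of degree `m` over `F` is strictly less than the number of
monic irreducible polynomials of degree `n`. -/
theorem count_monic_irreducible_strict_mono (F : Type) [Field F] [Fintype F] (m n : ℕ)
    (hm : 1 ≤ m) (hmn : m < n)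
    (hsmall : Fintype.card F = 2 ∨ Fintype.card F = 3 → 2 ≤ m) :
    Nat.card {p : F[X] // p.Monic ∧ Irreducible p ∧ p.natDegree = m} <
      Nat.card {p : F[X] // p.Monic ∧ Irreducible p ∧ p.natDegree = n} := by
  rw [Ncard_eq, Ncard_eq]
  set q := Fintype.card F with hqdef
  have hq : 2 ≤ q := Fintype.one_lt_card
  set Nm := (SF F m).card with hNmdef
  set Nm' := (SF F n).card with hNndef
  set G := ∑ d ∈ Icc 1 (n / 2), q ^ d with hGdef
  have hL2 : q ^ n ≤ n * Nm' + G := L2 n (by omega)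
  have hGb : G + q ≤ q ^ (n / 2 + 1) := G_bound q hq (n / 2)
  rcases Nat.lt_or_ge m 2 with hm1 | hm2
  · -- m = 1
    have hm1' : m = 1 := by omega
    subst hm1'
    have hq4 : 4 ≤ q := by
      rcases Nat.lt_or_ge q 4 with h | h
      · interval_cases q <;> simp_all <;> omega
      · exact h
    have hNm : Nm ≤ q := by
      have := L1w (F := F) 1 (by omega)
      rw [← hNmdef] at this
      simpa using this
    have hW1 : n * q + G < q ^ n := by
      rcases Nat.lt_or_ge n 3 with h3 | h3
      · have hn2 : n = 2 := by omega
        subst hn2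
        have : G = q := by
          rw [hGdef]
          norm_num
        rw [this, pow_two]
        nlinarith
      · obtain ⟨j, rfl⟩ : ∃ j, n = j + 2 := ⟨n - 2, by omega⟩
        have hj1 : 1 ≤ j := by omega
        have hsle : (j + 2) / 2 + 1 ≤ j + 1 := by omega
        have hG2 : G + q ≤ q ^ (j + 1) :=
          hGb.trans (Nat.pow_le_pow_right (by omega) hsle)
        have hjq : j + 1 ≤ q ^ j := by
          calc j + 1 ≤ 2 ^ j := Nat.lt_two_pow_self
            _ ≤ q ^ j := Nat.pow_le_pow_left (by omega) j
        have e1 : q ^ (j + 1) = q * q ^ j := by ring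
        have e2 : q ^ (j + 2) = q * q * q ^ j := by ring
        rw [e2]
        rw [e1] at hG2
        have f1 : (j + 1) * q ≤ q ^ j * q := Nat.mul_le_mul_right q hjq
        have f3 : 4 * (q * q ^ j) ≤ q * (q * q ^ j) := Nat.mul_le_mul_right _ hq4
        have f4 : 0 < q * q ^ j := by positivity
        nlinarith [hG2, f1, f3, f4]
    have : n * Nm < n * Nm' := by
      have h5 : n * Nm ≤ n * q := Nat.mul_le_mul_left n hNm
      omega
    exact Nat.lt_of_mul_lt_mul_left this
  · -- 2 ≤ m
    have hA2 : m * Nm + q ≤ q ^ m := L1s m hm2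
    obtain ⟨j, rfl⟩ : ∃ j, n = j + 1 := ⟨n - 1, by omega⟩
    have hj2 : 2 ≤ j := by omega
    have hmj : m ≤ j := by omega
    have hMon := Mon q hq m (by omega) j hmj
    have hB := B_ineq q hq j hj2
    have h1 := Nat.mul_le_mul_left (j + 1) hMon
    have h2 := Nat.mul_le_mul_left m hB
    have hC : j * ((j + 1) * q ^ m + m * q ^ ((j + 1) / 2 + 1))
        ≤ j * ((j + 1) * q + m * q ^ (j + 1)) := by nlinarith [h1, h2]
    have hC' : (j + 1) * q ^ m + m * q ^ ((j + 1) / 2 + 1)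
        ≤ (j + 1) * q + m * q ^ (j + 1) :=
      Nat.le_of_mul_le_mul_left hC (by omega)
    have hGm : m * G + m * q ≤ m * q ^ ((j + 1) / 2 + 1) := by
      calc m * G + m * q = m * (G + q) := by ring
        _ ≤ m * q ^ ((j + 1) / 2 + 1) := Nat.mul_le_mul_left m hGb
    have hW : m * G + (j + 1) * q ^ m + m * q ≤ m * q ^ (j + 1) + (j + 1) * q := by
      linarith [hC', hGm]
    have f1 : (j + 1) * (m * Nm) + (j + 1) * q ≤ (j + 1) * q ^ m := by
      calc (j + 1) * (m * Nm) + (j + 1) * q = (j + 1) * (m * Nm + q) := by ring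
        _ ≤ (j + 1) * q ^ m := Nat.mul_le_mul_left (j + 1) hA2
    have f2 : m * q ^ (j + 1) ≤ m * ((j + 1) * Nm') + m * G := by
      calc m * q ^ (j + 1) ≤ m * ((j + 1) * Nm' + G) := Nat.mul_le_mul_left m hL2
        _ = m * ((j + 1) * Nm') + m * G := by ring
    have hmq : 0 < m * q := by positivity
    have hfinal : ((j + 1) * m) * Nm < ((j + 1) * m) * Nm' := by
      have e1 : ((j + 1) * m) * Nm = (j + 1) * (m * Nm) := by ring
      have e2 : ((j + 1) * m) * Nm' = m * ((j + 1) * Nm') := by ring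
      rw [e1, e2]
      linarith [f1, f2, hW, hmq]
    exact Nat.lt_of_mul_lt_mul_left hfinal

end Final
end

section
/- If n is a prime number with n ≤ q, then the number of monic Carmichael polynomials of degree n in F_q[t] equals the binomial coefficient C(q, n); if n is prime with n > q, there are no Carmichael polynomials of degree n. -/
open Polynomial

/-- `g` is a Carmichael polynomial: squarefree, not irreducible (composite), nonconstant,
and every monic irreducible factor has degree dividing `deg g`. -/
def IsCarmichaelPoly {F : Type} [Field F] (g : F[X]) : Prop :=
  Squarefree g ∧ ¬Irreducible g ∧ 0 < g.natDegree ∧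
    ∀ P : F[X], P.Monic → Irreducible P → P ∣ g → P.natDegree ∣ g.natDegree

section Aux

variable {F : Type} [Field F] [DecidableEq F]

lemma roots_nodup_of_squarefree {g : F[X]} (h : Squarefree g) : g.roots.Nodup := by
  rw [Multiset.nodup_iff_count_le_one]
  intro a
  rw [count_roots]
  by_contra hc
  push_neg at hc
  have h2 : (X - C a) * (X - C a) ∣ g := by
    calc (X - C a) * (X - C a) = (X - C a) ^ 2 := by ring
    _ ∣ (X - C a) ^ rootMultiplicity a g := pow_dvd_pow _ hc
    _ ∣ g := pow_rootMultiplicity_dvd g a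
  exact Polynomial.not_isUnit_X_sub_C a (h _ h2)

omit [DecidableEq F] in
lemma splits_of_carmichael {g : F[X]} (hn : g.natDegree.Prime) (hg : IsCarmichaelPoly g) :
    g.Splits := by
  obtain ⟨hsq, hirr, hpos, hdvd⟩ := hg
  have hg0 : g ≠ 0 := fun h => by simp [h] at hpos
  rw [splits_iff_splits]
  refine Or.inr fun {P} hP hPd => ?_
  have hP0 : P ≠ 0 := hP.ne_zero
  set M : F[X] := P * C P.leadingCoeff⁻¹ with hM
  have hassoc : Associated P M := by
    exact associated_mul_unit_right P _ (isUnit_C.mpr (isUnit_iff_ne_zero.mpr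
      (inv_ne_zero (leadingCoeff_ne_zero.mpr hP0))))
  have hMmonic : M.Monic := monic_mul_leadingCoeff_inv hP0
  have hMirr : Irreducible M := hassoc.irreducible hP
  have hMd : M ∣ g := hassoc.dvd_iff_dvd_left.mp hPd
  have hdeg : M.natDegree ∣ g.natDegree := hdvd M hMmonic hMirr hMd
  have hdegP : P.natDegree = M.natDegree :=
    (natDegree_mul_C (inv_ne_zero (leadingCoeff_ne_zero.mpr hP0))).symm
  rcases (Nat.Prime.eq_one_or_self_of_dvd hn _ hdeg) with h1 | h1
  · rw [degree_eq_natDegree hP0, hdegP, h1]; rfl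
  · exfalso
    obtain ⟨h, hh⟩ := hMd
    have hh0 : h ≠ 0 := fun hz => by simp [hz] at hh; exact hg0 hh
    have hdh : h.natDegree = 0 := by
      have := natDegree_mul (hMmonic.ne_zero) hh0
      rw [← hh, h1] at this
      omega
    have hu : IsUnit h := by
      obtain ⟨c, hcq⟩ := natDegree_eq_zero.mp hdh
      rw [← hcq]
      exact isUnit_C.mpr (isUnit_iff_ne_zero.mpr (fun hc0 => hh0 (by rw [← hcq, hc0, map_zero])))
    apply hirr
    rw [hh]
    exact (associated_mul_unit_right M h hu).irreducible hMirr

lemma carmichael_prime_roots_card {g : F[X]} (hg : IsCarmichaelPoly g)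
    (hn : g.natDegree.Prime) : g.roots.toFinset.card = g.natDegree := by
  have hs := splits_of_carmichael hn hg
  rw [Multiset.toFinset_card_of_nodup (roots_nodup_of_squarefree hg.1)]
  exact splits_iff_card_roots.mp hs

lemma isCarmichael_prod_X_sub_C {s : Finset F} (hn : (2:ℕ) ≤ s.card) :
    IsCarmichaelPoly (∏ a ∈ s, (X - C a)) ∧ (∏ a ∈ s, (X - C a)).Monic ∧
      (∏ a ∈ s, (X - C a)).natDegree = s.card := by
  set g : F[X] := ∏ a ∈ s, (X - C a) with hgdef
  have hmonic : g.Monic := monic_prod_of_monic _ _ fun a _ => monic_X_sub_C a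
  have hdeg : g.natDegree = s.card := by
    rw [hgdef, natDegree_prod _ _ (fun a _ => X_sub_C_ne_zero a)]
    simp
  have hsq : Squarefree g := by
    refine Separable.squarefree ?_
    exact separable_prod_X_sub_C_iff'.mpr fun x _ y _ h => h
  have hnotirr : ¬Irreducible g := by
    intro hirr
    obtain ⟨a, ha⟩ := Finset.card_pos.mp (by omega : 0 < s.card)
    have heq : g = (X - C a) * ∏ b ∈ s.erase a, (X - C b) :=
      (Finset.mul_prod_erase s _ ha).symm
    rcases hirr.isUnit_or_isUnit heq with h | h
    · exact Polynomial.not_isUnit_X_sub_C a h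
    · refine not_isUnit_of_natDegree_pos _ ?_ h
      rw [natDegree_prod _ _ (fun b _ => X_sub_C_ne_zero b)]
      simp only [natDegree_X_sub_C, Finset.sum_const, smul_eq_mul, mul_one]
      rw [Finset.card_erase_of_mem ha]
      omega
  refine ⟨⟨hsq, hnotirr, by omega, fun P hPm hPi hPd => ?_⟩, hmonic, hdeg⟩
  obtain ⟨a, _, hPa⟩ := (UniqueFactorizationMonoid.irreducible_iff_prime.mp
    hPi).exists_mem_finset_dvd hPd
  have h1 : P.natDegree ≤ 1 := by
    have := natDegree_le_of_dvd hPa (X_sub_C_ne_zero a)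
    simpa using this
  have h0 : P.natDegree ≠ 0 := by
    intro h0
    exact hPi.not_isUnit ((hPm.natDegree_eq_zero.mp h0) ▸ isUnit_one)
  have : P.natDegree = 1 := by omega
  rw [this]
  exact one_dvd _

end Aux

/-- For a prime `n ≤ q`, the number of monic Carmichael polynomials of degree `n` in `F_q[t]`
is `C(q, n)`; for a prime `n > q` there are no Carmichael polynomials of degree `n`. -/
theorem carmichael_poly_prime_degree_count (F : Type) [Field F] [Fintype F] (n : ℕ)
    (hn : n.Prime) :
    (n ≤ Fintype.card F →
      Nat.card {g : F[X] // g.Monic ∧ IsCarmichaelPoly g ∧ g.natDegree = n} =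
        (Fintype.card F).choose n) ∧
    (Fintype.card F < n → ∀ g : F[X], ¬(IsCarmichaelPoly g ∧ g.natDegree = n)) := by
  classical
  constructor
  · intro _
    have hbij : Function.Bijective
        (fun g : {g : F[X] // g.Monic ∧ IsCarmichaelPoly g ∧ g.natDegree = n} =>
          (⟨g.1.roots.toFinset, by
            have := carmichael_prime_roots_card g.2.2.1 (by rw [g.2.2.2]; exact hn)
            rw [this, g.2.2.2]⟩ : {s : Finset F // s.card = n})) := by
      constructor
      · rintro ⟨g1, hm1, hc1, hd1⟩ ⟨g2, hm2, hc2, hd2⟩ h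
        simp only [Subtype.mk.injEq] at h ⊢
        have key : ∀ g : F[X], g.Monic → IsCarmichaelPoly g → g.natDegree = n →
            g = (g.roots.map fun a => X - C a).prod := by
          intro g hm hc hd
          exact (prod_multiset_X_sub_C_of_monic_of_roots_card_eq hm
            (splits_iff_card_roots.mp (splits_of_carmichael (by rw [hd]; exact hn) hc))).symm
        have hr : g1.roots = g2.roots := by
          have n1 := roots_nodup_of_squarefree hc1.1
          have n2 := roots_nodup_of_squarefree hc2.1
          have hv : g1.roots.toFinset.val = g2.roots.toFinset.val := by rw [h]
          rwa [Multiset.toFinset_val, Multiset.toFinset_val, n1.dedup, n2.dedup] at hv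
        rw [key g1 hm1 hc1 hd1, key g2 hm2 hc2 hd2, hr]
      · rintro ⟨s, hs⟩
        have h2 : (2:ℕ) ≤ s.card := hs ▸ hn.two_le
        obtain ⟨hc, hm, hd⟩ := isCarmichael_prod_X_sub_C h2
        refine ⟨⟨∏ a ∈ s, (X - C a), hm, hc, hd.trans hs⟩, ?_⟩
        simp only [Subtype.mk.injEq]
        rw [roots_prod_X_sub_C, Finset.val_toFinset]
    rw [Nat.card_eq_of_bijective _ hbij, Nat.card_eq_fintype_card, Fintype.card_finset_len]
  · intro hlt g ⟨hc, hd⟩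
    have := carmichael_prime_roots_card hc (by rw [hd]; exact hn)
    have hle : g.roots.toFinset.card ≤ Fintype.card F := by
      simpa using Finset.card_le_univ g.roots.toFinset
    omega
end

section
/- If the number of monic irreducible polynomials of degree n/ℓ in F_q[t] exceeds ℓ, where ℓ is the smallest prime factor of a composite n, then there exist at least two monic Carmichael polynomials of degree n in F_q[t], obtained as products of ℓ distinct monic irreducibles of degree n/ℓ. -/
open Polynomial

section aux

variable {F : Type} [Field F]

lemma mem_of_monic_irred_dvd_prod {P : F[X]} (hPm : P.Monic) (hPi : Irreducible P)
    {s : Finset F[X]} (hs : ∀ p ∈ s, p.Monic ∧ Irreducible p)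
    (hdvd : P ∣ s.prod id) : P ∈ s := by
  obtain ⟨p, hp, hPp⟩ := hPi.prime.exists_mem_finset_dvd hdvd
  obtain ⟨hpm, hpi⟩ := hs p hp
  have : Associated P p := hPi.associated_of_dvd hpi hPp
  rwa [eq_of_monic_of_associated hPm hpm this]

lemma squarefree_prod_of_monic_irred {s : Finset F[X]}
    (hs : ∀ p ∈ s, p.Monic ∧ Irreducible p) : Squarefree (s.prod id) := by
  classical
  induction s using Finset.induction_on with
  | empty => simp
  | @insert a s ha ih =>
    rw [Finset.prod_insert ha]
    have hsa : ∀ p ∈ s, p.Monic ∧ Irreducible p := fun p hp =>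
      hs p (Finset.mem_insert_of_mem hp)
    have hai := (hs a (Finset.mem_insert_self a s)).2
    refine squarefree_mul_iff.mpr ⟨?_, hai.squarefree, ih hsa⟩
    refine (hai.coprime_iff_not_dvd.mpr fun hdvd => ?_).isRelPrime
    exact ha (mem_of_monic_irred_dvd_prod (hs a (Finset.mem_insert_self a s)).1 hai hsa hdvd)

lemma key_carmichael {d ℓ : ℕ} (hd : 0 < d) (hℓ : 1 < ℓ) (s : Finset F[X])
    (hs : ∀ p ∈ s, p.Monic ∧ Irreducible p ∧ p.natDegree = d) (hcard : s.card = ℓ) :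
    (s.prod id).Monic ∧ IsCarmichaelPoly (s.prod id) ∧ (s.prod id).natDegree = ℓ * d := by
  classical
  have hmi : ∀ p ∈ s, p.Monic ∧ Irreducible p := fun p hp => ⟨(hs p hp).1, (hs p hp).2.1⟩
  have hmonic : (s.prod id).Monic := monic_prod_of_monic _ _ fun p hp => (hs p hp).1
  have hdeg : (s.prod id).natDegree = ℓ * d := by
    have h1 := natDegree_prod_of_monic s id (fun p hp => (hs p hp).1)
    simp only [id] at h1
    rw [show (s.prod id).natDegree = ∑ i ∈ s, i.natDegree from h1,
      Finset.sum_congr rfl fun p hp => (hs p hp).2.2, Finset.sum_const, smul_eq_mul, hcard]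
  refine ⟨hmonic, ⟨squarefree_prod_of_monic_irred hmi, ?_, ?_, ?_⟩, hdeg⟩
  · -- not irreducible
    intro hirr
    obtain ⟨a, ha⟩ : s.Nonempty := Finset.card_pos.mp (by omega)
    have hprod : s.prod id = a * (s.erase a).prod id := by
      rw [← Finset.prod_erase_mul s id ha, mul_comm]; rfl
    rcases hirr.isUnit_or_isUnit hprod with h | h
    · exact (hs a ha).2.1.not_isUnit h
    · have hm : ((s.erase a).prod id).Monic :=
        monic_prod_of_monic _ _ fun p hp => (hs p (Finset.mem_of_mem_erase hp)).1
      have hdeg' : ((s.erase a).prod id).natDegree = (ℓ - 1) * d := by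
        have h1 := natDegree_prod_of_monic (s.erase a) id
          (fun p hp => (hs p (Finset.mem_of_mem_erase hp)).1)
        simp only [id] at h1
        rw [show ((s.erase a).prod id).natDegree = ∑ i ∈ s.erase a, i.natDegree from h1,
          Finset.sum_congr rfl fun p hp => (hs p (Finset.mem_of_mem_erase hp)).2.2,
          Finset.sum_const, smul_eq_mul, Finset.card_erase_of_mem ha, hcard]
      exact not_isUnit_of_natDegree_pos _ (by rw [hdeg']; exact Nat.mul_pos (by omega) hd) h
  · rw [hdeg]; exact Nat.mul_pos (by omega) hd
  · intro P hPm hPi hPdvd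
    have hPmem := mem_of_monic_irred_dvd_prod hPm hPi hmi hPdvd
    rw [hdeg, (hs P hPmem).2.2]
    exact dvd_mul_left _ _

end aux

/-- If the number of monic irreducible polynomials of degree `n/ℓ` exceeds `ℓ`, where `ℓ` is
the smallest prime factor of the composite number `n`, then there exist at least two distinct
monic Carmichael polynomials of degree `n`, each a product of `ℓ` distinct monic irreducibles
of degree `n/ℓ`. -/
theorem carmichael_poly_exists_two (F : Type) [Field F] [Fintype F] (n : ℕ)
    (hn : 1 < n) (hcomp : ¬n.Prime)
    (hπ : n.minFac <
      Nat.card {p : F[X] // p.Monic ∧ Irreducible p ∧ p.natDegree = n / n.minFac}) :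
    ∃ g₁ g₂ : F[X], g₁ ≠ g₂ ∧
      ∀ g ∈ [g₁, g₂], g.Monic ∧ IsCarmichaelPoly g ∧ g.natDegree = n ∧
        ∃ s : Finset F[X], s.card = n.minFac ∧
          (∀ p ∈ s, p.Monic ∧ Irreducible p ∧ p.natDegree = n / n.minFac) ∧
          g = s.prod id := by
  classical
  set ℓ := n.minFac with hℓdef
  have hℓp : ℓ.Prime := Nat.minFac_prime (by omega)
  have hℓ1 : 1 < ℓ := hℓp.one_lt
  have hℓdvd : ℓ ∣ n := Nat.minFac_dvd n
  have hℓlt : ℓ < n := by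
    have hle : ℓ ≤ n := Nat.minFac_le (by omega)
    rcases lt_or_eq_of_le hle with h | h
    · exact h
    · exact absurd (h ▸ hℓp) hcomp
  have hd : ℓ * (n / ℓ) = n := Nat.mul_div_cancel' hℓdvd
  have hdpos : 0 < n / ℓ := Nat.div_pos (le_of_lt hℓlt) hℓp.pos
  -- the set of monic irreducibles of degree n/ℓ is finite with card > ℓ
  set S : Set F[X] := {p | p.Monic ∧ Irreducible p ∧ p.natDegree = n / ℓ} with hSdef
  have hfin : S.Finite := by
    have : Finite {p : F[X] // p.Monic ∧ Irreducible p ∧ p.natDegree = n / ℓ} :=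
      Nat.finite_of_card_ne_zero (by omega)
    exact Set.finite_coe_iff.mp this
  have hcard : ℓ + 1 ≤ hfin.toFinset.card := by
    have h2 : ℓ < Nat.card S := hπ
    have h3 : Nat.card S = hfin.toFinset.card := by
      rw [Nat.card_coe_set_eq, Set.ncard_eq_toFinset_card _ hfin]
    omega
  obtain ⟨T, hTsub, hTcard⟩ := Finset.exists_subset_card_eq hcard
  have hTmem : ∀ p ∈ T, p.Monic ∧ Irreducible p ∧ p.natDegree = n / ℓ := fun p hp => by
    have := hTsub hp; rwa [Set.Finite.mem_toFinset] at this
  obtain ⟨a, ha⟩ : T.Nonempty := Finset.card_pos.mp (by omega)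
  obtain ⟨b, hb⟩ : (T.erase a).Nonempty := Finset.card_pos.mp (by
    rw [Finset.card_erase_of_mem ha, hTcard]; omega)
  have hba : b ≠ a := Finset.ne_of_mem_erase hb
  have hbT : b ∈ T := Finset.mem_of_mem_erase hb
  set s₁ := T.erase a with hs₁
  set s₂ := T.erase b with hs₂
  have hs₁mem : ∀ p ∈ s₁, p.Monic ∧ Irreducible p ∧ p.natDegree = n / ℓ :=
    fun p hp => hTmem p (Finset.mem_of_mem_erase hp)
  have hs₂mem : ∀ p ∈ s₂, p.Monic ∧ Irreducible p ∧ p.natDegree = n / ℓ :=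
    fun p hp => hTmem p (Finset.mem_of_mem_erase hp)
  have hs₁card : s₁.card = ℓ := by rw [hs₁, Finset.card_erase_of_mem ha, hTcard]; omega
  have hs₂card : s₂.card = ℓ := by rw [hs₂, Finset.card_erase_of_mem hbT, hTcard]; omega
  have h₁ := key_carmichael hdpos hℓ1 s₁ hs₁mem hs₁card
  have h₂ := key_carmichael hdpos hℓ1 s₂ hs₂mem hs₂card
  refine ⟨s₁.prod id, s₂.prod id, ?_, ?_⟩
  · -- distinctness: a divides prod s₂ but not prod s₁
    intro heq
    have hadvd : a ∣ s₂.prod id := Finset.dvd_prod_of_mem id (by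
      exact Finset.mem_erase.mpr ⟨fun h => hba h.symm, ha⟩)
    rw [← heq] at hadvd
    have : a ∈ s₁ := mem_of_monic_irred_dvd_prod (hTmem a ha).1 (hTmem a ha).2.1
      (fun p hp => ⟨(hs₁mem p hp).1, (hs₁mem p hp).2.1⟩) hadvd
    exact Finset.notMem_erase a T this
  · intro g hg
    simp only [List.mem_cons, List.not_mem_nil, or_false, List.mem_singleton] at hg
    rcases hg with rfl | rfl
    · exact ⟨h₁.1, h₁.2.1, by rw [h₁.2.2, hd], s₁, hs₁card, hs₁mem, rfl⟩
    · exact ⟨h₂.1, h₂.2.1, by rw [h₂.2.2, hd], s₂, hs₂card, hs₂mem, rfl⟩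
end

section
/- The natural density of Carmichael polynomials in F_q[t] is zero: lim_{n→∞} (C_q(1) + C_q(2) + ... + C_q(n))/q^n = 0, where C_q(m) is the number of monic Carmichael polynomials of degree m. -/
open Polynomial

open Polynomial Finset Topology
set_option linter.unusedSectionVars false

noncomputable section Carm

attribute [local instance] Classical.propDecidable

lemma esymm_key {α : Type*} [DecidableEq α] (s : Finset α) (w : α → ℝ) (K : ℕ) :
    ∑ S ∈ s.powersetCard (K+1), ((K:ℝ)+1) * ∏ a ∈ S, w a
      = ∑ T ∈ s.powersetCard K, ∑ a ∈ s \ T, (w a * ∏ x ∈ T, w x) := by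
  have h1 : ∀ S ∈ s.powersetCard (K+1), ((K:ℝ)+1) * ∏ a ∈ S, w a
      = ∑ a ∈ S, ∏ x ∈ S, w x := by
    intro S hS
    rw [Finset.sum_const, (Finset.mem_powersetCard.1 hS).2]
    push_cast
    ring
  rw [Finset.sum_congr rfl h1, Finset.sum_sigma', Finset.sum_sigma']
  refine Finset.sum_nbij' (i := fun p => ⟨p.1.erase p.2, p.2⟩)
    (j := fun p => ⟨insert p.2 p.1, p.2⟩) ?_ ?_ ?_ ?_ ?_
  · rintro ⟨S, a⟩ hp
    rw [Finset.mem_sigma] at hp ⊢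
    obtain ⟨hS, ha⟩ := hp
    rw [Finset.mem_powersetCard] at hS
    refine ⟨Finset.mem_powersetCard.2 ⟨(Finset.erase_subset _ _).trans hS.1, ?_⟩, ?_⟩
    · rw [Finset.card_erase_of_mem ha, hS.2]; omega
    · exact Finset.mem_sdiff.2 ⟨hS.1 ha, Finset.notMem_erase _ _⟩
  · rintro ⟨T, a⟩ hp
    rw [Finset.mem_sigma] at hp ⊢
    obtain ⟨hT, ha⟩ := hp
    rw [Finset.mem_powersetCard] at hT
    rw [Finset.mem_sdiff] at ha
    refine ⟨Finset.mem_powersetCard.2 ⟨?_, ?_⟩, Finset.mem_insert_self _ _⟩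
    · exact Finset.insert_subset ha.1 hT.1
    · rw [Finset.card_insert_of_notMem ha.2, hT.2]
  · rintro ⟨S, a⟩ hp
    rw [Finset.mem_sigma] at hp
    simp only [Finset.insert_erase hp.2]
  · rintro ⟨T, a⟩ hp
    rw [Finset.mem_sigma] at hp
    rw [Finset.mem_sdiff] at hp
    simp only [Finset.erase_insert hp.2.2]
  · rintro ⟨S, a⟩ hp
    rw [Finset.mem_sigma] at hp
    exact (Finset.mul_prod_erase S w hp.2).symm

lemma esymm_le {α : Type*} [DecidableEq α] (s : Finset α) (w : α → ℝ)
    (hw : ∀ a ∈ s, 0 ≤ w a) (K : ℕ) :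
    (K.factorial : ℝ) * ∑ S ∈ s.powersetCard K, ∏ a ∈ S, w a
      ≤ (∑ a ∈ s, w a) ^ K := by
  induction K with
  | zero => simp
  | succ K ih =>
    have hprod : ∀ T ∈ s.powersetCard K, (0:ℝ) ≤ ∏ x ∈ T, w x := by
      intro T hT
      exact Finset.prod_nonneg fun x hx => hw x ((Finset.mem_powersetCard.1 hT).1 hx)
    have step : ((K:ℝ)+1) * ∑ S ∈ s.powersetCard (K+1), ∏ a ∈ S, w a
        ≤ (∑ a ∈ s, w a) * ∑ T ∈ s.powersetCard K, ∏ a ∈ T, w a := by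
      rw [Finset.mul_sum, esymm_key s w K, Finset.mul_sum]
      refine Finset.sum_le_sum ?_
      intro T hT
      rw [Finset.sum_mul]
      refine Finset.sum_le_sum_of_subset_of_nonneg (Finset.sdiff_subset) ?_
      intro a ha _
      exact mul_nonneg (hw a ha) (hprod T hT)
    have hnn : (0:ℝ) ≤ ∑ S ∈ s.powersetCard (K+1), ∏ a ∈ S, w a :=
      Finset.sum_nonneg fun S hS => Finset.prod_nonneg fun a haS =>
        hw a ((Finset.mem_powersetCard.1 hS).1 haS)
    have hsnn : (0:ℝ) ≤ ∑ a ∈ s, w a := Finset.sum_nonneg hw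
    calc ((K+1).factorial : ℝ) * ∑ S ∈ s.powersetCard (K+1), ∏ a ∈ S, w a
        = (K.factorial : ℝ) * (((K:ℝ)+1) * ∑ S ∈ s.powersetCard (K+1), ∏ a ∈ S, w a) := by
          rw [Nat.factorial_succ]; push_cast; ring
      _ ≤ (K.factorial : ℝ) * ((∑ a ∈ s, w a) * ∑ T ∈ s.powersetCard K, ∏ a ∈ T, w a) := by
          refine mul_le_mul_of_nonneg_left step (by positivity)
      _ = (∑ a ∈ s, w a) * ((K.factorial : ℝ) * ∑ T ∈ s.powersetCard K, ∏ a ∈ T, w a) := by ring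
      _ ≤ (∑ a ∈ s, w a) * (∑ a ∈ s, w a) ^ K := mul_le_mul_of_nonneg_left ih hsnn
      _ = (∑ a ∈ s, w a) ^ (K+1) := by ring


variable (F : Type) [Field F] [Fintype F]

/-- All polynomials of natDegree ≤ k, as a Finset. -/
def polyBdd (k : ℕ) : Finset F[X] :=
  (Finset.univ : Finset (Fin (k+1) → F)).image
    (fun c => ∑ i : Fin (k+1), Polynomial.monomial (i : ℕ) (c i))

variable {F}

lemma mem_polyBdd {k : ℕ} {p : F[X]} (h : p.natDegree ≤ k) : p ∈ polyBdd F k := by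
  refine Finset.mem_image.2 ⟨fun i => p.coeff i, Finset.mem_univ _, ?_⟩
  rw [Fin.sum_univ_eq_sum_range (fun i => Polynomial.monomial i (p.coeff i)) (k+1)]
  exact (Polynomial.as_sum_range' p (k+1) (Nat.lt_succ_of_le h)).symm

lemma card_polyBdd (k : ℕ) : (polyBdd F k).card ≤ Fintype.card F ^ (k+1) := by
  refine Finset.card_image_le.trans ?_
  simp [Finset.card_univ]

variable (F)

/-- Monic polynomials of natDegree exactly m. -/
def monicsD (m : ℕ) : Finset F[X] :=
  (polyBdd F m).filter (fun g => g.Monic ∧ g.natDegree = m)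

/-- Monic irreducible polynomials of natDegree exactly d. -/
def irrD (d : ℕ) : Finset F[X] := (monicsD F d).filter (fun P => Irreducible P)

variable {F}

lemma mem_monicsD {m : ℕ} {g : F[X]} (h1 : g.Monic) (h2 : g.natDegree = m) :
    g ∈ monicsD F m :=
  Finset.mem_filter.2 ⟨mem_polyBdd h2.le, h1, h2⟩

lemma mem_monicsD_iff {m : ℕ} {g : F[X]} :
    g ∈ monicsD F m ↔ g.Monic ∧ g.natDegree = m := by
  constructor
  · exact fun h => (Finset.mem_filter.1 h).2
  · exact fun h => mem_monicsD h.1 h.2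

lemma mem_irrD_iff {d : ℕ} {P : F[X]} :
    P ∈ irrD F d ↔ P.Monic ∧ P.natDegree = d ∧ Irreducible P := by
  simp only [irrD, Finset.mem_filter, mem_monicsD_iff]
  tauto

/-- Count of monic polynomials of degree m divisible by a fixed monic P. -/
lemma card_multiples_le {m : ℕ} (P : F[X]) (hP : P.Monic) :
    ((monicsD F m).filter (fun g => P ∣ g)).card
      ≤ Fintype.card F ^ (m - P.natDegree + 1) := by
  refine (Finset.card_le_card_of_injOn (f := fun g => g /ₘ P)
    (t := polyBdd F (m - P.natDegree)) ?_ ?_).trans (card_polyBdd _)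
  · intro g hg
    rcases Finset.mem_filter.1 hg with ⟨hg1, hg2⟩
    rcases mem_monicsD_iff.1 hg1 with ⟨hm, hd⟩
    refine mem_polyBdd ?_
    rw [Polynomial.natDegree_divByMonic g hP, hd]
  · intro g1 h1 g2 h2 heq
    rcases Finset.mem_filter.1 h1 with ⟨-, hdvd1⟩
    rcases Finset.mem_filter.1 h2 with ⟨-, hdvd2⟩
    have e1 : P * (g1 /ₘ P) = g1 := by
      have := Polynomial.modByMonic_add_div g1 P
      rwa [(Polynomial.modByMonic_eq_zero_iff_dvd hP).2 hdvd1, zero_add] at this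
    have e2 : P * (g2 /ₘ P) = g2 := by
      have := Polynomial.modByMonic_add_div g2 P
      rwa [(Polynomial.modByMonic_eq_zero_iff_dvd hP).2 hdvd2, zero_add] at this
    simp only at heq
    rw [← e1, ← e2, heq]

/-- Any monic irreducible of degree d divides X^(q^d) - X. -/
lemma irr_dvd_X_pow_card_sub_X {P : F[X]} (hP : Irreducible P) :
    P ∣ (X ^ (Fintype.card F ^ P.natDegree) - X) := by
  haveI : Fact (Irreducible P) := ⟨hP⟩
  have hP0 : P ≠ 0 := hP.ne_zero
  let b : PowerBasis F (AdjoinRoot P) := AdjoinRoot.powerBasis hP0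
  haveI : Module.Finite F (AdjoinRoot P) := b.finite
  haveI : Finite (AdjoinRoot P) := Module.finite_of_finite F
  haveI : Fintype (AdjoinRoot P) := Fintype.ofFinite _
  have hcard : Fintype.card (AdjoinRoot P) = Fintype.card F ^ P.natDegree := by
    rw [Module.card_fintype b.basis, Fintype.card_fin, AdjoinRoot.powerBasis_dim]
  have hroot : (AdjoinRoot.root P) ^ (Fintype.card F ^ P.natDegree) = AdjoinRoot.root P := by
    rw [← hcard]; exact FiniteField.pow_card _
  rw [← AdjoinRoot.mk_eq_zero, map_sub, map_pow, AdjoinRoot.mk_X, hroot, sub_self]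

lemma coprime_of_ne {P Q : F[X]} (hPm : P.Monic) (hQm : Q.Monic)
    (hP : Irreducible P) (hQ : Irreducible Q) (hne : P ≠ Q) : IsCoprime P Q := by
  rw [hP.coprime_iff_not_dvd]
  intro hdvd
  exact hne (Polynomial.eq_of_monic_of_associated hPm hQm (hP.associated_of_dvd hQ hdvd))

lemma natDegree_XqX (d : ℕ) (hd : 1 ≤ d) :
    (X ^ (Fintype.card F ^ d) - X : F[X]).natDegree = Fintype.card F ^ d := by
  have h2 : 2 ≤ Fintype.card F ^ d :=
    le_trans Fintype.one_lt_card (Nat.le_self_pow (by omega) _)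
  rw [Polynomial.natDegree_sub_eq_left_of_natDegree_lt]
  · exact natDegree_X_pow _
  · rw [natDegree_X, natDegree_X_pow]; omega

/-- The count of monic irreducibles of degree d: d * π_d ≤ q^d. -/
lemma card_irrD_le (d : ℕ) (hd : 1 ≤ d) :
    d * (irrD F d).card ≤ Fintype.card F ^ d := by
  set Q : F[X] := X ^ (Fintype.card F ^ d) - X with hQ
  have hQdeg : Q.natDegree = Fintype.card F ^ d := natDegree_XqX d hd
  have hQ0 : Q ≠ 0 := by
    intro h
    rw [h, natDegree_zero] at hQdeg
    have := @Fintype.one_lt_card F _ _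
    have := Nat.one_le_two_pow (n := d)
    have h2 : 2 ≤ Fintype.card F ^ d :=
      le_trans Fintype.one_lt_card (Nat.le_self_pow (by omega) _)
    omega
  have hdvd : (∏ P ∈ irrD F d, P) ∣ Q := by
    apply Finset.prod_dvd_of_coprime
    · intro P hP R hR hne
      rcases mem_irrD_iff.1 (Finset.mem_coe.1 hP) with ⟨hPm, -, hPi⟩
      rcases mem_irrD_iff.1 (Finset.mem_coe.1 hR) with ⟨hRm, -, hRi⟩
      exact coprime_of_ne hPm hRm hPi hRi hne
    · intro P hP
      rcases mem_irrD_iff.1 hP with ⟨hPm, hPd, hPi⟩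
      have := irr_dvd_X_pow_card_sub_X hPi
      rwa [hPd] at this
  have hdeg : (∏ P ∈ irrD F d, P).natDegree = d * (irrD F d).card := by
    rw [Polynomial.natDegree_prod_of_monic]
    · rw [Finset.sum_congr rfl (fun P hP => (mem_irrD_iff.1 hP).2.1),
        Finset.sum_const, smul_eq_mul, mul_comm]
    · exact fun P hP => (mem_irrD_iff.1 hP).1
  calc d * (irrD F d).card = (∏ P ∈ irrD F d, P).natDegree := hdeg.symm
    _ ≤ Q.natDegree := Polynomial.natDegree_le_of_dvd hdvd hQ0
    _ = Fintype.card F ^ d := hQdeg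

variable (F) in
/-- Monic irreducibles of degree between 1 and D. -/
def irrUpTo (D : ℕ) : Finset F[X] := (Finset.Icc 1 D).biUnion (fun d => irrD F d)


lemma carm_structure {m s : ℕ} (hs1 : 1 ≤ s) (hsm : s ≤ m) {g : F[X]}
    (hg : g.Monic) (hc : IsCarmichaelPoly g) (hdeg : g.natDegree = m) :
    (∃ d ∈ m.divisors.filter (fun d => m / s < d), ∃ P ∈ irrD F d, P ∣ g) ∨
    (∃ S ∈ (irrUpTo F (m / s)).powersetCard s, (∏ P ∈ S, P) ∣ g) := by
  have hm0 : 0 < m := hdeg ▸ hc.2.2.1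
  have hg0 : g ≠ 0 := hg.ne_zero
  set M := UniqueFactorizationMonoid.normalizedFactors g with hM
  have hnodup : M.Nodup :=
    (UniqueFactorizationMonoid.squarefree_iff_nodup_normalizedFactors hg0).1 hc.1
  set T := M.toFinset with hT
  have hmemM : ∀ P ∈ T, P ∈ M := fun P hP => Multiset.mem_toFinset.1 hP
  have hirr : ∀ P ∈ T, Irreducible P := fun P hP =>
    UniqueFactorizationMonoid.irreducible_of_normalized_factor P (hmemM P hP)
  have hmon : ∀ P ∈ T, P.Monic := by
    intro P hP
    have h1 := UniqueFactorizationMonoid.normalize_normalized_factor P (hmemM P hP)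
    have h2 := Polynomial.monic_normalize (R := F) (p := P) (hirr P hP).ne_zero
    rwa [h1] at h2
  have hdvdg : ∀ P ∈ T, P ∣ g := fun P hP =>
    UniqueFactorizationMonoid.dvd_of_mem_normalizedFactors (hmemM P hP)
  have hdegdvd : ∀ P ∈ T, P.natDegree ∣ m := fun P hP =>
    hdeg ▸ hc.2.2.2 P (hmon P hP) (hirr P hP) (hdvdg P hP)
  have hdegpos : ∀ P ∈ T, 1 ≤ P.natDegree := by
    intro P hP
    by_contra h
    have h0 : P.natDegree = 0 := by omega
    have := (Polynomial.Monic.natDegree_eq_zero (hmon P hP)).1 h0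
    exact (hirr P hP).not_isUnit (this ▸ isUnit_one)
  have hTval : T.val = M := by
    rw [hT, Multiset.toFinset_val, Multiset.dedup_eq_self.2 hnodup]
  have hprodM : M.prod = g := by
    have ha : Associated M.prod g := UniqueFactorizationMonoid.prod_normalizedFactors hg0
    refine Polynomial.eq_of_monic_of_associated ?_ hg ha
    have := Polynomial.monic_multiset_prod_of_monic M id (fun P hP => by
      have : P ∈ T := Multiset.mem_toFinset.2 hP
      exact hmon P this)
    rwa [Multiset.map_id] at this
  have hsum : ∑ P ∈ T, P.natDegree = m := by
    have h1 : M.prod.natDegree = (M.map Polynomial.natDegree).sum :=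
      Polynomial.natDegree_multiset_prod_of_monic M (fun P hP =>
        hmon P (Multiset.mem_toFinset.2 hP))
    have h2 : ∑ P ∈ T, P.natDegree = (T.val.map Polynomial.natDegree).sum := rfl
    rw [h2, hTval, ← h1, hprodM, hdeg]
  by_cases hbig : ∃ P ∈ T, m / s < P.natDegree
  · left
    obtain ⟨P, hPT, hlt⟩ := hbig
    exact ⟨P.natDegree,
      Finset.mem_filter.2 ⟨Nat.mem_divisors.2 ⟨hdegdvd P hPT, hm0.ne'⟩, hlt⟩,
      P, mem_irrD_iff.2 ⟨hmon P hPT, rfl, hirr P hPT⟩, hdvdg P hPT⟩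
  · right
    push_neg at hbig
    have hTsub : T ⊆ irrUpTo F (m / s) := by
      intro P hP
      refine Finset.mem_biUnion.2 ⟨P.natDegree,
        Finset.mem_Icc.2 ⟨hdegpos P hP, hbig P hP⟩,
        mem_irrD_iff.2 ⟨hmon P hP, rfl, hirr P hP⟩⟩
    have hcard : s ≤ T.card := by
      by_contra h
      push_neg at h
      have h2 : ∑ P ∈ T, P.natDegree ≤ T.card * (m / s) := by
        have := Finset.sum_le_card_nsmul T (fun P => P.natDegree) (m / s)
          (fun P hP => hbig P hP)
        simpa [smul_eq_mul] using this
      have h3 : 1 ≤ m / s := (Nat.one_le_div_iff (by omega)).2 hsm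
      have h4 : s * (m / s) ≤ m := by
        have := Nat.div_mul_le_self m s
        linarith [Nat.div_mul_le_self m s, mul_comm s (m / s)]
      obtain ⟨t, ht⟩ : ∃ t, s = t + 1 := ⟨s - 1, by omega⟩
      subst ht
      set x := m / (t + 1) with hx
      have h5 : T.card * x ≤ t * x := Nat.mul_le_mul_right _ (by omega)
      have h6 : (t + 1) * x = t * x + x := by ring
      have h7 : m ≤ T.card * x := hsum ▸ h2
      linarith
    obtain ⟨S, hST, hScard⟩ := Finset.exists_subset_card_eq hcard
    refine ⟨S, Finset.mem_powersetCard.2 ⟨hST.trans hTsub, hScard⟩, ?_⟩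
    refine Finset.prod_dvd_of_coprime ?_ (fun P hP => hdvdg P (hST hP))
    intro P hP Q hQ hne
    have hP' := hST (Finset.mem_coe.1 hP)
    have hQ' := hST (Finset.mem_coe.1 hQ)
    exact coprime_of_ne (hmon P hP') (hmon Q hQ') (hirr P hP') (hirr Q hQ') hne

lemma carm_card_le (m s : ℕ) (hs1 : 1 ≤ s) (hsm : s ≤ m) :
    ((monicsD F m).filter (fun g => IsCarmichaelPoly g)).card
      ≤ (∑ d ∈ m.divisors.filter (fun d => m / s < d), ∑ _P ∈ irrD F d,
            Fintype.card F ^ (m - d + 1))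
        + ∑ S ∈ (irrUpTo F (m / s)).powersetCard s,
            Fintype.card F ^ (m - (∑ P ∈ S, P.natDegree) + 1) := by
  classical
  set A := (m.divisors.filter (fun d => m / s < d)).biUnion
      (fun d => (irrD F d).biUnion (fun P => (monicsD F m).filter (fun g => P ∣ g))) with hA
  set B := ((irrUpTo F (m / s)).powersetCard s).biUnion
      (fun S => (monicsD F m).filter (fun g => (∏ P ∈ S, P) ∣ g)) with hB
  have hsub : (monicsD F m).filter (fun g => IsCarmichaelPoly g) ⊆ A ∪ B := by
    intro g hg
    rcases Finset.mem_filter.1 hg with ⟨hg1, hg2⟩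
    rcases mem_monicsD_iff.1 hg1 with ⟨hmon, hdeg⟩
    rcases carm_structure hs1 hsm hmon hg2 hdeg with h | h
    · obtain ⟨d, hd, P, hP, hdvd⟩ := h
      exact Finset.mem_union_left _ (Finset.mem_biUnion.2 ⟨d, hd,
        Finset.mem_biUnion.2 ⟨P, hP, Finset.mem_filter.2 ⟨hg1, hdvd⟩⟩⟩)
    · obtain ⟨S, hS, hdvd⟩ := h
      exact Finset.mem_union_right _ (Finset.mem_biUnion.2 ⟨S, hS,
        Finset.mem_filter.2 ⟨hg1, hdvd⟩⟩)
  refine (Finset.card_le_card hsub).trans ((Finset.card_union_le _ _).trans ?_)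
  have hAle : A.card ≤ ∑ d ∈ m.divisors.filter (fun d => m / s < d), ∑ _P ∈ irrD F d,
      Fintype.card F ^ (m - d + 1) := by
    refine (Finset.card_biUnion_le).trans ?_
    refine Finset.sum_le_sum ?_
    intro d hd
    refine (Finset.card_biUnion_le).trans ?_
    refine Finset.sum_le_sum ?_
    intro P hP
    rcases mem_irrD_iff.1 hP with ⟨hPm, hPd, -⟩
    have := card_multiples_le (m := m) P hPm
    rwa [hPd] at this
  have hBle : B.card ≤ ∑ S ∈ (irrUpTo F (m / s)).powersetCard s,
      Fintype.card F ^ (m - (∑ P ∈ S, P.natDegree) + 1) := by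
    refine (Finset.card_biUnion_le).trans ?_
    refine Finset.sum_le_sum ?_
    intro S hS
    have hmonS : ∀ P ∈ S, (P : F[X]).Monic := by
      intro P hP
      have hP' := (Finset.mem_powersetCard.1 hS).1 hP
      obtain ⟨d, -, hPd⟩ := Finset.mem_biUnion.1 hP'
      exact (mem_irrD_iff.1 hPd).1
    have hprodmon : (∏ P ∈ S, P).Monic := Polynomial.monic_prod_of_monic _ _ hmonS
    have hdegS : (∏ P ∈ S, P).natDegree = ∑ P ∈ S, P.natDegree :=
      Polynomial.natDegree_prod_of_monic _ _ hmonS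
    have := card_multiples_le (m := m) (∏ P ∈ S, P) hprodmon
    rwa [hdegS] at this
  omega

lemma card_divisors_gt (m s : ℕ) (hm : 0 < m) (hs1 : 1 ≤ s) :
    (m.divisors.filter (fun d => m / s < d)).card ≤ s := by
  refine (Finset.card_le_card_of_injOn (f := fun d => m / d)
    (t := Finset.Icc 1 s) ?_ ?_).trans (by simp)
  · intro d hd
    rcases Finset.mem_filter.1 hd with ⟨hd1, hd2⟩
    rcases Nat.mem_divisors.1 hd1 with ⟨hdvd, -⟩
    have hdpos : 0 < d := Nat.pos_of_dvd_of_pos hdvd hm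
    have hdm : d ≤ m := Nat.le_of_dvd hm hdvd
    refine Finset.mem_Icc.2 ⟨(Nat.one_le_div_iff hdpos).2 hdm, ?_⟩
    by_contra hgt
    push_neg at hgt
    have h1 : d * (s + 1) ≤ m := by
      obtain ⟨c, hc⟩ := hdvd
      have : s + 1 ≤ c := by
        have : m / d = c := by rw [hc, Nat.mul_div_cancel_left _ hdpos]
        omega
      calc d * (s+1) ≤ d * c := Nat.mul_le_mul_left _ this
        _ = m := hc.symm
    have h2 : d ≤ m / (s + 1) := (Nat.le_div_iff_mul_le (by omega)).2 h1
    have h3 : m / (s + 1) ≤ m / s := Nat.div_le_div_left (by omega) (by omega)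
    omega
  · intro d1 h1 d2 h2 heq
    simp only at heq
    rcases Nat.mem_divisors.1 (Finset.mem_filter.1 h1).1 with ⟨hdvd1, -⟩
    rcases Nat.mem_divisors.1 (Finset.mem_filter.1 h2).1 with ⟨hdvd2, -⟩
    have e1 : m / (m / d1) = d1 := Nat.div_div_self hdvd1 hm.ne'
    have e2 : m / (m / d2) = d2 := Nat.div_div_self hdvd2 hm.ne'
    rw [← e1, ← e2, heq]

lemma carm_card_real (m s : ℕ) (hs1 : 1 ≤ s) (hsm : s ≤ m) :
    (((monicsD F m).filter (fun g => IsCarmichaelPoly g)).card : ℝ)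
      ≤ (Fintype.card F : ℝ)^(m+1) *
          ((s:ℝ)^2 / m
            + (∑ d ∈ Finset.Icc 1 (m/s), (d:ℝ)⁻¹)^s / s.factorial) := by
  classical
  set q : ℕ := Fintype.card F with hqdef
  have hq1 : 1 < q := Fintype.one_lt_card
  have hq0 : (0:ℝ) < (q:ℝ) := by positivity
  have hm0 : 0 < m := by omega
  have hc := carm_card_le (F := F) m s hs1 hsm
  have hcR : (((monicsD F m).filter (fun g => IsCarmichaelPoly g)).card : ℝ)
      ≤ (∑ d ∈ m.divisors.filter (fun d => m / s < d), ∑ _P ∈ irrD F d,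
            ((q:ℝ)) ^ (m - d + 1))
        + ∑ S ∈ (irrUpTo F (m / s)).powersetCard s,
            ((q:ℝ)) ^ (m - (∑ P ∈ S, P.natDegree) + 1) := by
    calc (((monicsD F m).filter (fun g => IsCarmichaelPoly g)).card : ℝ)
        ≤ ((∑ d ∈ m.divisors.filter (fun d => m / s < d), ∑ _P ∈ irrD F d,
              q ^ (m - d + 1))
          + ∑ S ∈ (irrUpTo F (m / s)).powersetCard s,
              q ^ (m - (∑ P ∈ S, P.natDegree) + 1) : ℕ) := by exact_mod_cast hc
      _ = _ := by push_cast; ring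
  refine hcR.trans ?_
  rw [mul_add]
  refine add_le_add ?_ ?_
  · -- A part
    have hterm : ∀ d ∈ m.divisors.filter (fun d => m / s < d),
        (∑ _P ∈ irrD F d, ((q:ℝ)) ^ (m - d + 1))
          ≤ (q:ℝ)^(m+1) * ((s:ℝ) / m) := by
      intro d hd
      rcases Finset.mem_filter.1 hd with ⟨hd1, hd2⟩
      rcases Nat.mem_divisors.1 hd1 with ⟨hdvd, -⟩
      have hdpos : 0 < d := Nat.pos_of_dvd_of_pos hdvd hm0
      have hdm : d ≤ m := Nat.le_of_dvd hm0 hdvd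
      have hpi : ((irrD F d).card : ℝ) * (d:ℝ) ≤ (q:ℝ)^d := by
        have := card_irrD_le (F := F) d hdpos
        calc ((irrD F d).card : ℝ) * (d:ℝ) = ((d * (irrD F d).card : ℕ) : ℝ) := by
              push_cast; ring
          _ ≤ ((q^d : ℕ) : ℝ) := by exact_mod_cast this
          _ = (q:ℝ)^d := by push_cast; ring
      have hms : (m:ℝ) ≤ (s:ℝ) * (d:ℝ) := by
        have : m < d * s := (Nat.div_lt_iff_lt_mul (by omega)).1 hd2
        have : (m:ℝ) < (d:ℝ) * (s:ℝ) := by exact_mod_cast this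
        linarith
      rw [Finset.sum_const, nsmul_eq_mul]
      have hpow : ((q:ℝ)) ^ (m - d + 1) * (q:ℝ)^d = (q:ℝ)^(m+1) := by
        rw [← pow_add]
        congr 1
        omega
      -- card * q^(m-d+1) ≤ q^(m+1)/d ≤ q^(m+1) * s/m
      have h1 : ((irrD F d).card : ℝ) * ((q:ℝ)) ^ (m - d + 1) ≤ (q:ℝ)^(m+1) / d := by
        rw [le_div_iff₀ (by positivity : (0:ℝ) < (d:ℝ))]
        calc ((irrD F d).card : ℝ) * ((q:ℝ)) ^ (m - d + 1) * (d:ℝ)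
            = (((irrD F d).card : ℝ) * (d:ℝ)) * ((q:ℝ)) ^ (m - d + 1) := by ring
          _ ≤ (q:ℝ)^d * ((q:ℝ)) ^ (m - d + 1) := by
              refine mul_le_mul_of_nonneg_right hpi (by positivity)
          _ = (q:ℝ)^(m+1) := by rw [mul_comm]; exact hpow
      refine h1.trans ?_
      rw [show (q:ℝ)^(m+1) * ((s:ℝ) / m) = (q:ℝ)^(m+1) * (s:ℝ) / (m:ℝ) by ring,
        div_le_div_iff₀ (by positivity) (by positivity)]
      calc (q:ℝ)^(m+1) * (m:ℝ) ≤ (q:ℝ)^(m+1) * ((s:ℝ)*(d:ℝ)) :=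
            mul_le_mul_of_nonneg_left hms (by positivity)
        _ = (q:ℝ)^(m+1) * (s:ℝ) * (d:ℝ) := by ring
    calc ∑ d ∈ m.divisors.filter (fun d => m / s < d), ∑ _P ∈ irrD F d,
          ((q:ℝ)) ^ (m - d + 1)
        ≤ ∑ _d ∈ m.divisors.filter (fun d => m / s < d), (q:ℝ)^(m+1) * ((s:ℝ) / m) :=
          Finset.sum_le_sum hterm
      _ = ((m.divisors.filter (fun d => m / s < d)).card : ℝ) * ((q:ℝ)^(m+1) * ((s:ℝ)/m)) := by
          rw [Finset.sum_const, nsmul_eq_mul]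
      _ ≤ (s:ℝ) * ((q:ℝ)^(m+1) * ((s:ℝ)/m)) := by
          refine mul_le_mul_of_nonneg_right ?_ (by positivity)
          exact_mod_cast card_divisors_gt m s hm0 hs1
      _ = (q:ℝ)^(m+1) * ((s:ℝ)^2/m) := by ring
  · -- B part
    set D := m / s with hD
    have hDs : s * D ≤ m := by
      have := Nat.div_mul_le_self m s
      calc s * D = m / s * s := by rw [mul_comm]
        _ ≤ m := this
    have hw : ∀ P ∈ irrUpTo F D, (0:ℝ) ≤ ((q:ℝ)⁻¹)^P.natDegree :=
      fun P _ => by positivity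
    have hdegle : ∀ S ∈ (irrUpTo F D).powersetCard s, (∑ P ∈ S, P.natDegree) ≤ m := by
      intro S hS
      rcases Finset.mem_powersetCard.1 hS with ⟨hsub, hcard⟩
      have hbd : ∀ P ∈ S, P.natDegree ≤ D := by
        intro P hP
        obtain ⟨d, hd, hPd⟩ := Finset.mem_biUnion.1 (hsub hP)
        rw [(mem_irrD_iff.1 hPd).2.1]
        exact (Finset.mem_Icc.1 hd).2
      calc ∑ P ∈ S, P.natDegree ≤ S.card * D := by
            simpa [smul_eq_mul] using Finset.sum_le_card_nsmul S _ D hbd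
        _ = s * D := by rw [hcard]
        _ ≤ m := hDs
    have hterm : ∀ S ∈ (irrUpTo F D).powersetCard s,
        ((q:ℝ)) ^ (m - (∑ P ∈ S, P.natDegree) + 1)
          = (q:ℝ)^(m+1) * ∏ P ∈ S, ((q:ℝ)⁻¹)^P.natDegree := by
      intro S hS
      rw [Finset.prod_pow_eq_pow_sum, inv_pow, ← div_eq_mul_inv,
        eq_div_iff (by positivity : ((q:ℝ)^(∑ P ∈ S, P.natDegree)) ≠ 0), ← pow_add]
      congr 1
      have := hdegle S hS
      omega
    have hdisj : ((Finset.Icc 1 D : Finset ℕ) : Set ℕ).PairwiseDisjoint (fun d => irrD F d) := by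
      intro d1 _ d2 _ hne
      refine Finset.disjoint_left.2 (fun P hP1 hP2 => hne ?_)
      rw [← (mem_irrD_iff.1 hP1).2.1, ← (mem_irrD_iff.1 hP2).2.1]
    have hWsum : (∑ P ∈ irrUpTo F D, ((q:ℝ)⁻¹)^P.natDegree)
        ≤ ∑ d ∈ Finset.Icc 1 D, (d:ℝ)⁻¹ := by
      rw [irrUpTo, Finset.sum_biUnion hdisj]
      refine Finset.sum_le_sum ?_
      intro d hd
      have hd1 : 1 ≤ d := (Finset.mem_Icc.1 hd).1
      have hinner : ∑ P ∈ irrD F d, ((q:ℝ)⁻¹)^P.natDegree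
          = ((irrD F d).card : ℝ) * ((q:ℝ)⁻¹)^d := by
        rw [Finset.sum_congr rfl (fun P hP => by rw [(mem_irrD_iff.1 hP).2.1]),
          Finset.sum_const, nsmul_eq_mul]
      rw [hinner]
      have hpi : ((irrD F d).card : ℝ) * (d:ℝ) ≤ (q:ℝ)^d := by
        have := card_irrD_le (F := F) d hd1
        calc ((irrD F d).card : ℝ) * (d:ℝ) = ((d * (irrD F d).card : ℕ) : ℝ) := by
              push_cast; ring
          _ ≤ ((q^d : ℕ) : ℝ) := by exact_mod_cast this
          _ = (q:ℝ)^d := by push_cast; ring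
      have hd0 : (0:ℝ) < (d:ℝ) := by positivity
      rw [inv_pow, ← one_div, mul_one_div, ← one_div ((d:ℝ)),
        div_le_div_iff₀ (by positivity) hd0]
      linarith [hpi]
    have hesymm := esymm_le (irrUpTo F D) (fun P => ((q:ℝ)⁻¹)^P.natDegree) hw s
    have hfact : (0:ℝ) < (s.factorial : ℝ) := by positivity
    have hWnn : (0:ℝ) ≤ ∑ P ∈ irrUpTo F D, ((q:ℝ)⁻¹)^P.natDegree :=
      Finset.sum_nonneg hw
    calc ∑ S ∈ (irrUpTo F D).powersetCard s, ((q:ℝ)) ^ (m - (∑ P ∈ S, P.natDegree) + 1)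
        = ∑ S ∈ (irrUpTo F D).powersetCard s,
            (q:ℝ)^(m+1) * ∏ P ∈ S, ((q:ℝ)⁻¹)^P.natDegree :=
          Finset.sum_congr rfl hterm
      _ = (q:ℝ)^(m+1) * ∑ S ∈ (irrUpTo F D).powersetCard s,
            ∏ P ∈ S, ((q:ℝ)⁻¹)^P.natDegree := by rw [Finset.mul_sum]
      _ ≤ (q:ℝ)^(m+1) * ((∑ P ∈ irrUpTo F D, ((q:ℝ)⁻¹)^P.natDegree)^s / s.factorial) := by
          refine mul_le_mul_of_nonneg_left ?_ (by positivity)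
          rw [le_div_iff₀ hfact, mul_comm]
          exact hesymm
      _ ≤ (q:ℝ)^(m+1) * ((∑ d ∈ Finset.Icc 1 D, (d:ℝ)⁻¹)^s / s.factorial) := by
          refine mul_le_mul_of_nonneg_left ?_ (by positivity)
          exact div_le_div_of_nonneg_right (pow_le_pow_left₀ hWnn hWsum s) hfact.le

lemma pow_self_le_exp_mul_factorial : ∀ n : ℕ, (n:ℝ)^n ≤ Real.exp 1 ^ n * n.factorial := by
  intro n
  induction n with
  | zero => simp
  | succ n ih =>
    have hexp : (0:ℝ) < Real.exp 1 := Real.exp_pos 1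
    have h1 : ((n:ℝ)+1)^n ≤ Real.exp 1 * (n:ℝ)^n := by
      rcases Nat.eq_zero_or_pos n with h | h
      · subst h; simpa using Real.one_le_exp (by norm_num)
      · have hn0 : (0:ℝ) < n := by exact_mod_cast h
        have h2 : (1 + 1/(n:ℝ)) ≤ Real.exp (1/n) := by
          have := Real.add_one_le_exp (1/(n:ℝ)); linarith
        have h3 : (1+1/(n:ℝ))^n ≤ Real.exp (1/(n:ℝ)) ^ n :=
          pow_le_pow_left₀ (by positivity) h2 n
        have h4 : Real.exp (1/(n:ℝ))^n = Real.exp 1 := by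
          rw [← Real.exp_nat_mul]; congr 1; field_simp
        calc ((n:ℝ)+1)^n = ((n:ℝ) * (1+1/n))^n := by
              congr 1; field_simp
          _ = (n:ℝ)^n * (1+1/(n:ℝ))^n := mul_pow _ _ _
          _ ≤ (n:ℝ)^n * Real.exp 1 := by
              refine mul_le_mul_of_nonneg_left (h3.trans_eq h4) (by positivity)
          _ = Real.exp 1 * (n:ℝ)^n := mul_comm _ _
    have step : ((n:ℝ)+1)^(n+1) ≤ Real.exp 1 ^ (n+1) * (n+1).factorial := by
      calc ((n:ℝ)+1)^(n+1) = ((n:ℝ)+1)^n * ((n:ℝ)+1) := pow_succ _ _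
        _ ≤ (Real.exp 1 * (n:ℝ)^n) * ((n:ℝ)+1) :=
            mul_le_mul_of_nonneg_right h1 (by positivity)
        _ ≤ (Real.exp 1 * (Real.exp 1 ^ n * n.factorial)) * ((n:ℝ)+1) := by
            refine mul_le_mul_of_nonneg_right (mul_le_mul_of_nonneg_left ih hexp.le) (by positivity)
        _ = Real.exp 1 ^ (n+1) * ((n.factorial : ℝ) * ((n:ℝ)+1)) := by ring
        _ = Real.exp 1 ^ (n+1) * (n+1).factorial := by
            rw [Nat.factorial_succ]; push_cast; ring
    calc ((n+1:ℕ):ℝ)^(n+1) = ((n:ℝ)+1)^(n+1) := by push_cast; ring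
      _ ≤ Real.exp 1 ^ (n+1) * (n+1).factorial := step

lemma pow_div_factorial_le (A : ℝ) (hA : 0 ≤ A) (s : ℕ) (hs : 1 ≤ s) :
    A^s / s.factorial ≤ (Real.exp 1 * A / s)^s := by
  have hs0 : (0:ℝ) < s := by exact_mod_cast hs
  have hfac : (0:ℝ) < s.factorial := by positivity
  have h := pow_self_le_exp_mul_factorial s
  rw [div_pow, mul_pow, div_le_div_iff₀ hfac (by positivity : (0:ℝ) < (s:ℝ)^s)]
  calc A^s * (s:ℝ)^s ≤ A^s * (Real.exp 1 ^ s * s.factorial) :=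
        mul_le_mul_of_nonneg_left h (by positivity)
    _ = Real.exp 1 ^ s * A^s * s.factorial := by ring

lemma harmonic_sum_le (D m : ℕ) (hDm : D ≤ m) (hm : 1 ≤ m) :
    ∑ d ∈ Finset.Icc 1 D, (d:ℝ)⁻¹ ≤ 1 + Real.log m := by
  have h1 : ∑ d ∈ Finset.Icc 1 D, (d:ℝ)⁻¹ = ((harmonic D : ℚ) : ℝ) := by
    rw [harmonic_eq_sum_Icc]; push_cast; rfl
  rw [h1]
  refine (harmonic_le_one_add_log D).trans ?_
  have hlog : Real.log D ≤ Real.log m := by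
    rcases Nat.eq_zero_or_pos D with h | h
    · subst h
      simpa using Real.log_nonneg (by exact_mod_cast hm)
    · exact Real.log_le_log (by exact_mod_cast h) (by exact_mod_cast hDm)
  linarith

lemma sqrt_sqrt_tendsto : Filter.Tendsto (fun m : ℕ => Nat.sqrt (Nat.sqrt m))
    Filter.atTop Filter.atTop := by
  rw [Filter.tendsto_atTop_atTop]
  intro b
  refine ⟨(b*b)*(b*b), fun m hm => ?_⟩
  have h1 : Nat.sqrt ((b*b)*(b*b)) = b*b := Nat.sqrt_eq (b*b)
  have h2 : b*b ≤ Nat.sqrt m := h1 ▸ Nat.sqrt_le_sqrt hm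
  calc b = Nat.sqrt (b*b) := (Nat.sqrt_eq b).symm
    _ ≤ Nat.sqrt (Nat.sqrt m) := Nat.sqrt_le_sqrt h2

lemma sqrt_tendsto : Filter.Tendsto (fun m : ℕ => Nat.sqrt m)
    Filter.atTop Filter.atTop := by
  rw [Filter.tendsto_atTop_atTop]
  intro b
  exact ⟨b*b, fun m hm => (Nat.sqrt_eq b) ▸ Nat.sqrt_le_sqrt hm⟩

lemma m_le_ssm (m : ℕ) : m ≤ (Nat.sqrt (Nat.sqrt m) + 1)^4 := by
  set s := Nat.sqrt (Nat.sqrt m) with hs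
  have h1 : Nat.sqrt m < (s+1)^2 := by
    have h := Nat.lt_succ_sqrt (Nat.sqrt m)
    calc Nat.sqrt m < (s+1)*(s+1) := h
      _ = (s+1)^2 := by ring
  have h2 : m < (Nat.sqrt m + 1)^2 := by
    have h := Nat.lt_succ_sqrt m
    calc m < (Nat.sqrt m + 1)*(Nat.sqrt m + 1) := h
      _ = (Nat.sqrt m + 1)^2 := by ring
  have h3 : Nat.sqrt m + 1 ≤ (s+1)^2 := h1
  calc m ≤ (Nat.sqrt m + 1)^2 := h2.le
    _ ≤ ((s+1)^2)^2 := Nat.pow_le_pow_left h3 2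
    _ = (s+1)^4 := by ring

open Filter in
lemma T1_tendsto : Tendsto (fun m : ℕ => ((Nat.sqrt (Nat.sqrt m) : ℝ))^2 / m)
    atTop (𝓝 0) := by
  have hg : Tendsto (fun m : ℕ => ((Nat.sqrt m : ℝ))⁻¹) atTop (𝓝 0) :=
    tendsto_inv_atTop_zero.comp (tendsto_natCast_atTop_atTop.comp sqrt_tendsto)
  refine squeeze_zero' ?_ ?_ hg
  · filter_upwards [Filter.eventually_ge_atTop 1] with m hm
    positivity
  · filter_upwards [Filter.eventually_ge_atTop 4] with m hm
    have hm1 : (1:ℝ) ≤ (m:ℝ) := by exact_mod_cast (by omega : 1 ≤ m)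
    have hm0 : (0:ℝ) < (m:ℝ) := by linarith
    have hsq : 1 ≤ Nat.sqrt m := by
      have : Nat.sqrt 4 ≤ Nat.sqrt m := Nat.sqrt_le_sqrt hm
      simpa using this.trans' (by norm_num)
    have ha0 : (0:ℝ) < (Nat.sqrt m : ℝ) := by exact_mod_cast hsq
    have h1 : ((Nat.sqrt (Nat.sqrt m) : ℝ))^2 ≤ (Nat.sqrt m : ℝ) := by
      have := Nat.sqrt_le' (Nat.sqrt m)
      have h2 : Nat.sqrt (Nat.sqrt m) ^ 2 ≤ Nat.sqrt m := by
        have := Nat.sqrt_le (Nat.sqrt m)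
        calc Nat.sqrt (Nat.sqrt m) ^ 2
            = Nat.sqrt (Nat.sqrt m) * Nat.sqrt (Nat.sqrt m) := by ring
          _ ≤ Nat.sqrt m := this
      exact_mod_cast h2
    have h3 : (Nat.sqrt m : ℝ) * (Nat.sqrt m : ℝ) ≤ (m:ℝ) := by
      exact_mod_cast Nat.sqrt_le m
    calc ((Nat.sqrt (Nat.sqrt m) : ℝ))^2 / m ≤ (Nat.sqrt m : ℝ) / m := by
          exact div_le_div_of_nonneg_right h1 hm0.le |>.trans_eq rfl
      _ ≤ ((Nat.sqrt m : ℝ))⁻¹ := by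
          rw [div_le_iff₀ hm0, ← div_eq_inv_mul, le_div_iff₀ ha0]
          linarith

open Filter in
lemma W_tendsto : Tendsto
    (fun t : ℕ => (Real.exp 1 * (1 + 4*Real.log ((t:ℝ)+1)) / t)^t) atTop (𝓝 0) := by
  have he : (0:ℝ) < Real.exp 1 := Real.exp_pos 1
  have he1 : (1:ℝ) ≤ Real.exp 1 := Real.one_le_exp (by norm_num)
  have he3 : Real.exp 1 < 3 := by
    have := Real.exp_one_lt_d9; linarith
  have hlog : Tendsto (fun x : ℝ => Real.log x / x) atTop (𝓝 0) :=
    Real.isLittleO_log_id_atTop.tendsto_div_nhds_zero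
  have hev : ∀ᶠ x : ℝ in atTop, Real.log x / x < (32 * Real.exp 1)⁻¹ :=
    hlog.eventually_lt_const (by positivity)
  obtain ⟨X, hX⟩ := Filter.eventually_atTop.1 hev
  have hbase : ∀ᶠ t : ℕ in atTop,
      Real.exp 1 * (1 + 4*Real.log ((t:ℝ)+1)) / t ≤ 1/2 := by
    have h1 : Tendsto (fun t : ℕ => ((t:ℝ)+1)) atTop atTop :=
      tendsto_atTop_add_const_right _ 1 tendsto_natCast_atTop_atTop
    filter_upwards [Filter.eventually_ge_atTop 13,
      h1.eventually (Filter.eventually_ge_atTop X),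
      h1.eventually (Filter.eventually_ge_atTop (1:ℝ))] with t ht hXt h1t
    have ht0 : (0:ℝ) < t := by exact_mod_cast (by omega : 0 < t)
    have hlt := hX _ hXt
    have hlogle : Real.log ((t:ℝ)+1) ≤ ((t:ℝ)+1) * (32 * Real.exp 1)⁻¹ := by
      rw [div_lt_iff₀ (by linarith : (0:ℝ) < (t:ℝ)+1)] at hlt
      linarith
    have ht13 : (13:ℝ) ≤ (t:ℝ) := by exact_mod_cast ht
    have ht1 : ((t:ℝ)+1) ≤ 2*t := by linarith
    have h2 : Real.log ((t:ℝ)+1) ≤ (t:ℝ) / (16 * Real.exp 1) := by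
      calc Real.log ((t:ℝ)+1) ≤ ((t:ℝ)+1) * (32 * Real.exp 1)⁻¹ := hlogle
        _ ≤ (2*(t:ℝ)) * (32 * Real.exp 1)⁻¹ := by
            refine mul_le_mul_of_nonneg_right ht1 (by positivity)
        _ = (t:ℝ) / (16 * Real.exp 1) := by field_simp; ring
    rw [div_le_iff₀ ht0]
    have h3 : Real.exp 1 * (4*Real.log ((t:ℝ)+1)) ≤ (t:ℝ)/4 := by
      calc Real.exp 1 * (4*Real.log ((t:ℝ)+1))
          ≤ Real.exp 1 * (4*((t:ℝ) / (16 * Real.exp 1))) := by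
            refine mul_le_mul_of_nonneg_left (by linarith) he.le
        _ = (t:ℝ)/4 := by field_simp; ring
    have h4 : Real.exp 1 ≤ (t:ℝ)/4 := by
      have : (13:ℝ) ≤ (t:ℝ) := by exact_mod_cast ht
      linarith
    calc Real.exp 1 * (1 + 4*Real.log ((t:ℝ)+1))
        = Real.exp 1 + Real.exp 1 * (4*Real.log ((t:ℝ)+1)) := by ring
      _ ≤ (t:ℝ)/4 + (t:ℝ)/4 := add_le_add h4 h3
      _ = 1/2 * (t:ℝ) := by ring
  refine squeeze_zero' ?_ ?_
    (tendsto_pow_atTop_nhds_zero_of_lt_one (by norm_num : (0:ℝ) ≤ 1/2)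
      (by norm_num : (1/2:ℝ) < 1))
  · filter_upwards [Filter.eventually_ge_atTop 1] with t ht
    have ht0 : (0:ℝ) < t := by exact_mod_cast (by omega : 0 < t)
    have : (0:ℝ) ≤ Real.log ((t:ℝ)+1) := Real.log_nonneg (by push_cast; linarith)
    positivity
  · filter_upwards [hbase, Filter.eventually_ge_atTop 1] with t hb ht
    have ht0 : (0:ℝ) < t := by exact_mod_cast (by omega : 0 < t)
    have hnn : (0:ℝ) ≤ Real.exp 1 * (1 + 4*Real.log ((t:ℝ)+1)) / t := by
      have : (0:ℝ) ≤ Real.log ((t:ℝ)+1) := Real.log_nonneg (by push_cast; linarith)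
      positivity
    exact pow_le_pow_left₀ hnn hb t

open Filter in
lemma T2_tendsto : Tendsto (fun m : ℕ =>
      (Real.exp 1 * (1 + Real.log m) / (Nat.sqrt (Nat.sqrt m)))^(Nat.sqrt (Nat.sqrt m)))
    atTop (𝓝 0) := by
  have hW := W_tendsto.comp sqrt_sqrt_tendsto
  refine squeeze_zero' ?_ ?_ hW
  · filter_upwards [Filter.eventually_ge_atTop 16] with m hm
    have hm1 : (1:ℝ) ≤ (m:ℝ) := by exact_mod_cast (by omega : 1 ≤ m)
    have hlognn : (0:ℝ) ≤ Real.log m := Real.log_nonneg hm1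
    positivity
  · filter_upwards [Filter.eventually_ge_atTop 16] with m hm
    set t := Nat.sqrt (Nat.sqrt m) with htdef
    have ht1 : 1 ≤ t := by
      have h4 : Nat.sqrt 16 ≤ Nat.sqrt m := Nat.sqrt_le_sqrt hm
      have : Nat.sqrt (Nat.sqrt 16) ≤ t := Nat.sqrt_le_sqrt h4
      simpa using this.trans' (by norm_num)
    have ht0 : (0:ℝ) < t := by exact_mod_cast ht1
    have hm1 : (1:ℝ) ≤ (m:ℝ) := by exact_mod_cast (by omega : 1 ≤ m)
    have hlog4 : Real.log m ≤ 4 * Real.log ((t:ℝ)+1) := by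
      have h1 : (m:ℝ) ≤ ((t:ℝ)+1)^4 := by
        have := m_le_ssm m
        exact_mod_cast this
      calc Real.log m ≤ Real.log (((t:ℝ)+1)^4) :=
            Real.log_le_log (by linarith) h1
        _ = 4 * Real.log ((t:ℝ)+1) := by
            rw [Real.log_pow]; push_cast; ring
    have hbasele : Real.exp 1 * (1 + Real.log m) / t
        ≤ Real.exp 1 * (1 + 4*Real.log ((t:ℝ)+1)) / t := by
      refine div_le_div_of_nonneg_right ?_ ht0.le |>.trans_eq rfl
      refine mul_le_mul_of_nonneg_left (by linarith) (Real.exp_pos 1).le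
    have hnn : (0:ℝ) ≤ Real.exp 1 * (1 + Real.log m) / t := by
      have : (0:ℝ) ≤ Real.log m := Real.log_nonneg hm1
      positivity
    exact pow_le_pow_left₀ hnn hbasele t

open Filter in
/-- The natural density of Carmichael polynomials in `F_q[t]` is zero:
`(C_q(1) + ⋯ + C_q(n)) / q^n → 0` as `n → ∞`, where `C_q(m)` is the number of monic
Carmichael polynomials of degree `m`. -/
theorem carmichael_poly_density_zero (F : Type) [Field F] [Fintype F] :
    Filter.Tendsto
      (fun n : ℕ =>
        (∑ m ∈ Finset.Icc 1 n,
            (Nat.card {g : F[X] // g.Monic ∧ IsCarmichaelPoly g ∧ g.natDegree = m} : ℝ)) /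
          (Fintype.card F : ℝ) ^ n)
      Filter.atTop (nhds 0) := by
  classical
  set Q : ℝ := (Fintype.card F : ℝ) with hQ
  have hq2 : (2:ℝ) ≤ Q := by
    have h : 2 ≤ Fintype.card F := Fintype.one_lt_card
    rw [hQ]
    exact_mod_cast h
  have hq0 : (0:ℝ) < Q := by linarith
  have hq1 : (1:ℝ) < Q := by linarith
  set c : ℕ → ℝ := fun m =>
    (Nat.card {g : F[X] // g.Monic ∧ IsCarmichaelPoly g ∧ g.natDegree = m} : ℝ) with hcdef
  have hceq : ∀ m : ℕ, c m
      = (((monicsD F m).filter (fun g => IsCarmichaelPoly g)).card : ℝ) := by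
    intro m
    have e : {g : F[X] // g.Monic ∧ IsCarmichaelPoly g ∧ g.natDegree = m}
        ≃ {g : F[X] // g ∈ (monicsD F m).filter (fun g => IsCarmichaelPoly g)} :=
      Equiv.subtypeEquivRight (fun g => by
        rw [Finset.mem_filter, mem_monicsD_iff]
        constructor
        · rintro ⟨h1, h2, h3⟩; exact ⟨⟨h1, h3⟩, h2⟩
        · rintro ⟨⟨h1, h3⟩, h2⟩; exact ⟨h1, h2, h3⟩)
    have := Nat.card_congr e
    rw [hcdef]
    simp only [this, Nat.card_eq_finsetCard]
  have hc0 : ∀ m, 0 ≤ c m := fun m => by rw [hceq]; positivity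
  set E : ℕ → ℝ := fun m => Q * (((Nat.sqrt (Nat.sqrt m) : ℝ))^2/m
      + (Real.exp 1 * (1 + Real.log m)/(Nat.sqrt (Nat.sqrt m)))^(Nat.sqrt (Nat.sqrt m)))
    with hE
  have hElim : Tendsto E atTop (𝓝 0) := by
    have h := (T1_tendsto.add T2_tendsto).const_mul Q
    simpa [hE] using h
  have hbound : ∀ᶠ m in atTop, c m ≤ Q^m * E m := by
    filter_upwards [eventually_ge_atTop 16] with m hm
    set s := Nat.sqrt (Nat.sqrt m) with hs
    have hs1 : 1 ≤ s := by
      have h4 : Nat.sqrt 16 ≤ Nat.sqrt m := Nat.sqrt_le_sqrt hm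
      have : Nat.sqrt (Nat.sqrt 16) ≤ s := Nat.sqrt_le_sqrt h4
      simpa using this.trans' (by norm_num)
    have hsm : s ≤ m := le_trans (Nat.sqrt_le_self _) (Nat.sqrt_le_self _)
    have hs0 : (0:ℝ) < (s:ℝ) := by exact_mod_cast hs1
    have hmain := carm_card_real (F := F) m s hs1 hsm
    rw [hceq]
    refine hmain.trans ?_
    set H : ℝ := ∑ d ∈ Finset.Icc 1 (m/s), (d:ℝ)⁻¹ with hH
    have hHnn : 0 ≤ H := Finset.sum_nonneg (fun d _ => by positivity)
    have hm1 : (1:ℝ) ≤ (m:ℝ) := by exact_mod_cast (by omega : 1 ≤ m)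
    have hlognn : (0:ℝ) ≤ Real.log m := Real.log_nonneg hm1
    have hsecond : H^s / s.factorial ≤ (Real.exp 1 * (1 + Real.log m)/(s:ℝ))^s := by
      refine (pow_div_factorial_le H hHnn s hs1).trans ?_
      refine pow_le_pow_left₀ (by positivity) ?_ s
      refine div_le_div_of_nonneg_right ?_ hs0.le |>.trans_eq rfl
      refine mul_le_mul_of_nonneg_left ?_ (Real.exp_pos 1).le
      exact harmonic_sum_le (m/s) m (Nat.div_le_self m s) (by omega)
    calc Q^(m+1) * ((s:ℝ)^2/m + H^s / s.factorial)
        ≤ Q^(m+1) * ((s:ℝ)^2/m + (Real.exp 1 * (1 + Real.log m)/(s:ℝ))^s) := by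
          refine mul_le_mul_of_nonneg_left (add_le_add_right hsecond _) (by positivity)
      _ = Q^m * E m := by rw [hE, pow_succ]; ring
  rw [Metric.tendsto_atTop]
  intro ε hε
  obtain ⟨M, hM⟩ := Filter.eventually_atTop.1
    (hbound.and (hElim.eventually_lt_const (by positivity : (0:ℝ) < ε/4)))
  set C0 : ℝ := ∑ m ∈ Finset.Icc 1 M, c m with hC0
  have hC0nn : 0 ≤ C0 := Finset.sum_nonneg (fun m _ => hc0 m)
  have hhead : Tendsto (fun n : ℕ => C0/Q^n) atTop (𝓝 0) :=
    Filter.Tendsto.div_atTop tendsto_const_nhds (tendsto_pow_atTop_atTop_of_one_lt hq1)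
  obtain ⟨N, hN⟩ := Filter.eventually_atTop.1
    (hhead.eventually_lt_const (by positivity : (0:ℝ) < ε/2))
  refine ⟨max M N, fun n hn => ?_⟩
  have hnM : M ≤ n := le_trans (le_max_left _ _) hn
  have hnN : N ≤ n := le_trans (le_max_right _ _) hn
  have hQn : (0:ℝ) < Q^n := by positivity
  have hpt : ∀ m ∈ Finset.Icc 1 n, c m ≤ (if m ≤ M then c m else 0) + (ε/4) * Q^m := by
    intro m _
    by_cases h : m ≤ M
    · simp only [if_pos h]
      have : (0:ℝ) ≤ (ε/4) * Q^m := by positivity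
      linarith
    · simp only [if_neg h]
      push_neg at h
      obtain ⟨hb, he⟩ := hM m h.le
      calc c m ≤ Q^m * E m := hb
        _ ≤ Q^m * (ε/4) := mul_le_mul_of_nonneg_left he.le (by positivity)
        _ = 0 + (ε/4) * Q^m := by ring
  have hite : ∑ m ∈ Finset.Icc 1 n, (if m ≤ M then c m else 0) ≤ C0 := by
    rw [← Finset.sum_filter]
    refine Finset.sum_le_sum_of_subset_of_nonneg ?_ (fun m _ _ => hc0 m)
    intro m hm
    rcases Finset.mem_filter.1 hm with ⟨hm1, hm2⟩
    exact Finset.mem_Icc.2 ⟨(Finset.mem_Icc.1 hm1).1, hm2⟩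
  have hgeo : ∑ m ∈ Finset.Icc 1 n, Q^m ≤ 2 * Q^n := by
    have h1 : ∑ m ∈ Finset.Icc 1 n, Q^m ≤ ∑ m ∈ Finset.range (n+1), Q^m := by
      refine Finset.sum_le_sum_of_subset_of_nonneg ?_ (fun m _ _ => by positivity)
      intro m hm
      rcases Finset.mem_Icc.1 hm with ⟨-, hm2⟩
      exact Finset.mem_range.2 (by omega)
    have h2 : ∑ m ∈ Finset.range (n+1), Q^m = (Q^(n+1) - 1)/(Q-1) :=
      geom_sum_eq (by linarith) (n+1)
    have h3 : (Q^(n+1) - 1)/(Q-1) ≤ 2*Q^n := by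
      rw [div_le_iff₀ (by linarith : (0:ℝ) < Q - 1)]
      have h4 : Q^(n+1) = Q^n * Q := pow_succ _ _
      nlinarith [hQn]
    linarith
  have hsum1 : ∑ m ∈ Finset.Icc 1 n, c m ≤ C0 + (ε/2) * Q^n := by
    calc ∑ m ∈ Finset.Icc 1 n, c m
        ≤ ∑ m ∈ Finset.Icc 1 n, ((if m ≤ M then c m else 0) + (ε/4) * Q^m) :=
          Finset.sum_le_sum hpt
      _ = (∑ m ∈ Finset.Icc 1 n, (if m ≤ M then c m else 0))
          + (ε/4) * ∑ m ∈ Finset.Icc 1 n, Q^m := by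
          rw [Finset.sum_add_distrib, Finset.mul_sum]
      _ ≤ C0 + (ε/4) * (2 * Q^n) := by
          refine add_le_add hite (mul_le_mul_of_nonneg_left hgeo (by positivity))
      _ = C0 + (ε/2) * Q^n := by ring
  have hfn : (∑ m ∈ Finset.Icc 1 n, c m) / Q^n ≤ C0/Q^n + ε/2 := by
    rw [div_le_iff₀ hQn]
    calc ∑ m ∈ Finset.Icc 1 n, c m ≤ C0 + (ε/2) * Q^n := hsum1
      _ = (C0/Q^n + ε/2) * Q^n := by field_simp
  have hnonneg : 0 ≤ (∑ m ∈ Finset.Icc 1 n, c m) / Q^n := by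
    refine div_nonneg (Finset.sum_nonneg (fun m _ => hc0 m)) hQn.le
  rw [Real.dist_eq, sub_zero, abs_of_nonneg hnonneg]
  have := hN n hnN
  linarith

end Carm
end

section
/- Let O_K ⊂ O_L be an extension of Dedekind domains with L/K finite separable of degree d, and let n be a squarefree ideal of O_K with |O_K/n| finite. Then nO_L is a Carmichael ideal of O_L if and only if nO_L is composite, n is coprime to the discriminant of L/K (equivalently all primes dividing n are unramified), and for each prime p | n and each prime P of O_L above p, N_K(p)^{f(P)} - 1 divides N_K(n)^d - 1, where f(P) is the residue degree. -/
open Ideal UniqueFactorizationMonoid Module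

lemma cardQuotProd {R ι : Type*} [CommRing R] (s : Finset ι) (I : ι → Ideal R)
    (h : Set.Pairwise ↑s (Function.onFun IsCoprime I)) :
    Nat.card (R ⧸ ∏ i ∈ s, I i) = ∏ i ∈ s, Nat.card (R ⧸ I i) := by
  classical
  induction s using Finset.cons_induction with
  | empty =>
      simp only [Finset.prod_empty]
      haveI : Subsingleton (R ⧸ (1 : Ideal R)) := by
        rw [Ideal.one_eq_top]
        exact Ideal.Quotient.subsingleton_iff.mpr rfl
      exact Nat.card_of_subsingleton 0
  | cons a s ha ih =>
      have h1 : IsCoprime (I a) (∏ i ∈ s, I i) := by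
        refine IsCoprime.prod_right fun i hi => ?_
        exact h (Finset.mem_cons_self a s) (Finset.mem_cons_of_mem hi)
          (fun e => ha (e ▸ hi))
      rw [Finset.prod_cons, Finset.prod_cons,
        Nat.card_congr (Ideal.quotientMulEquivQuotientProd _ _ h1).toEquiv, Nat.card_prod,
        ih (h.mono (by simp [Finset.coe_cons, Set.subset_insert]))]

lemma sf_prod {R : Type*} [CommRing R] [IsDedekindDomain R] [DecidableEq (Ideal R)] {I : Ideal R}
    (hbot : I ≠ ⊥) (hsf : Squarefree I) :
    ∏ P ∈ (normalizedFactors I).toFinset, P = I := by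
  classical
  have hn : (normalizedFactors I).Nodup :=
    (squarefree_iff_nodup_normalizedFactors hbot).mp hsf
  have hval : (normalizedFactors I).toFinset.val = normalizedFactors I :=
    Multiset.dedup_eq_self.mpr hn
  rw [Finset.prod_eq_multiset_prod, hval, Multiset.map_id']
  exact _root_.prod_normalizedFactors_eq_self hbot

lemma factors_pairwise_coprime {R : Type*} [CommRing R] [IsDedekindDomain R] [DecidableEq (Ideal R)] {I : Ideal R} :
    Set.Pairwise ((normalizedFactors I).toFinset : Set (Ideal R)) (Function.onFun IsCoprime id) := by
  intro P hP Q hQ hne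
  rw [Finset.mem_coe, Multiset.mem_toFinset] at hP hQ
  have hPp : Prime P := prime_of_normalized_factor _ hP
  have hQp : Prime Q := prime_of_normalized_factor _ hQ
  refine Ideal.isCoprime_iff_sup_eq.mpr ?_
  exact Ideal.IsMaximal.coprime_of_ne
    ((Ideal.isPrime_of_prime hPp).isMaximal hPp.ne_zero)
    ((Ideal.isPrime_of_prime hQp).isMaximal hQp.ne_zero) hne

section Korselt

variable {B : Type*} [CommRing B] [IsDedekindDomain B] [DecidableEq (Ideal B)]

lemma quotFinite {R : Type*} [CommRing R] {I P : Ideal R} (h : I ≤ P) [Finite (R ⧸ I)] :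
    Finite (R ⧸ P) := by
  refine Finite.of_surjective (Ideal.Quotient.factor h) fun y => ?_
  obtain ⟨x, rfl⟩ := Ideal.Quotient.mk_surjective y
  exact ⟨Ideal.Quotient.mk I x, rfl⟩

lemma pow_card_eq {F : Type*} [Field F] [Finite F] {N : ℕ} (hN : 1 ≤ N)
    (hdvd : Nat.card F - 1 ∣ N - 1) (y : F) : y ^ N = y := by
  letI : Fintype F := Fintype.ofFinite F
  rcases eq_or_ne y 0 with rfl | hy
  · exact zero_pow (by omega)
  obtain ⟨k, hk⟩ := hdvd
  have hq : y ^ (Nat.card F - 1) = 1 := by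
    rw [Nat.card_eq_fintype_card]
    exact FiniteField.pow_card_sub_one_eq_one y hy
  have h1 : y ^ (N - 1) = 1 := by rw [hk, pow_mul, hq, one_pow]
  calc y ^ N = y ^ (N - 1) * y := by rw [← pow_succ, Nat.sub_add_cancel hN]
  _ = y := by rw [h1, one_mul]

lemma korselt {I : Ideal B} (hbot : I ≠ ⊥) (htop : I ≠ ⊤) [Finite (B ⧸ I)] :
    (∀ β : B, β ^ Nat.card (B ⧸ I) - β ∈ I) ↔
      Squarefree I ∧ ∀ P : Ideal B, P.IsPrime → I ≤ P →
        Nat.card (B ⧸ P) - 1 ∣ Nat.card (B ⧸ I) - 1 := by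
  haveI : Nontrivial (B ⧸ I) := Ideal.Quotient.nontrivial_iff.mpr htop
  set N := Nat.card (B ⧸ I) with hN
  have hN2 : 2 ≤ N := Finite.one_lt_card
  constructor
  · intro h
    constructor
    · -- squarefree
      by_contra hsf
      simp only [Squarefree, not_forall] at hsf
      obtain ⟨J, hJJ, hJu⟩ := hsf
      have hJbot : J ≠ ⊥ := by
        rintro rfl
        exact hbot (by simpa using (eq_bot_iff.mpr (Ideal.le_of_dvd (by simpa using hJJ))))
      have hJtop : J ≠ ⊤ := fun e => hJu (by rw [e, ← Ideal.one_eq_top]; exact isUnit_one)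
      obtain ⟨P, hPm, hJP⟩ := Ideal.exists_le_maximal J hJtop
      have hPbot : P ≠ ⊥ := fun e => hJbot (le_bot_iff.mp (e ▸ hJP))
      have hPp : Prime P := Ideal.prime_of_isPrime hPbot hPm.isPrime
      have hP2 : P ^ 2 ∣ I := by
        rw [pow_two]
        exact (mul_dvd_mul (Ideal.dvd_iff_le.mpr hJP) (Ideal.dvd_iff_le.mpr hJP)).trans hJJ
      have hIle : I ≤ P ^ 2 := Ideal.le_of_dvd hP2
      have hlt : P ^ 2 < P := by
        refine lt_of_le_of_ne (Ideal.pow_le_self two_ne_zero) fun e => ?_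
        have : P * P = P * 1 := by rw [mul_one, ← pow_two, e]
        have h1 : P = 1 := mul_left_cancel₀ hPp.ne_zero this
        exact hPp.not_unit (h1 ▸ isUnit_one)
      obtain ⟨β, hβP, hβP2⟩ := SetLike.exists_of_lt hlt
      have h2 : β ^ N ∈ P ^ 2 := Ideal.pow_le_pow_right hN2 (Ideal.pow_mem_pow hβP N)
      have h3 : β ^ N - β ∈ P ^ 2 := hIle (h β)
      exact hβP2 (by simpa using sub_mem h2 h3)
    · intro P hP hle
      have hPbot : P ≠ ⊥ := fun e => hbot (le_bot_iff.mp (e ▸ hle))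
      haveI hPm : P.IsMaximal := hP.isMaximal hPbot
      letI : Field (B ⧸ P) := Ideal.Quotient.field P
      haveI : Finite (B ⧸ P) := quotFinite hle
      obtain ⟨g, hg⟩ := IsCyclic.exists_generator (α := (B ⧸ P)ˣ)
      have horder : orderOf g = Nat.card (B ⧸ P) - 1 := by
        rw [orderOf_eq_card_of_forall_mem_zpowers hg, Nat.card_units]
      obtain ⟨β, hβ⟩ := Ideal.Quotient.mk_surjective (I := P) (g : B ⧸ P)
      have hmem : (Ideal.Quotient.mk P) (β ^ N - β) = 0 :=
        Ideal.Quotient.eq_zero_iff_mem.mpr (hle (h β))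
      rw [map_sub, map_pow, hβ, sub_eq_zero] at hmem
      have hgN : g ^ N = g := Units.ext (by rw [Units.val_pow_eq_pow_val]; exact hmem)
      have hg1 : g ^ (N - 1) = 1 := by
        have : g ^ (N - 1) * g = 1 * g := by
          rw [← pow_succ, Nat.sub_add_cancel (by omega), one_mul, hgN]
        exact mul_right_cancel this
      rw [← horder]
      exact orderOf_dvd_of_pow_eq_one hg1
  · rintro ⟨hsf, hdiv⟩ β
    rw [← sf_prod hbot hsf, ← Ideal.dvd_span_singleton]
    refine Finset.prod_dvd_of_coprime factors_pairwise_coprime fun P hPt => ?_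
    rw [Ideal.dvd_span_singleton]
    rw [Multiset.mem_toFinset] at hPt
    have hPp : Prime P := prime_of_normalized_factor _ hPt
    have hP : P.IsPrime := Ideal.isPrime_of_prime hPp
    have hle : I ≤ P := Ideal.le_of_dvd (dvd_of_mem_normalizedFactors hPt)
    haveI hPm : P.IsMaximal := hP.isMaximal hPp.ne_zero
    letI : Field (B ⧸ P) := Ideal.Quotient.field P
    haveI : Finite (B ⧸ P) := quotFinite hle
    refine Ideal.Quotient.eq_zero_iff_mem.mp ?_
    rw [map_sub, map_pow, sub_eq_zero]
    exact pow_card_eq (by omega) (hdiv P hP hle) _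

end Korselt
section Cards

variable (A K L B : Type) [CommRing A] [IsDedekindDomain A] [Field K] [Field L] [CommRing B]
    [Algebra A K] [IsFractionRing A K] [Algebra K L] [FiniteDimensional K L]
    [Algebra.IsSeparable K L]
    [Algebra A B] [Algebra B L] [Algebra A L] [IsScalarTower A B L] [IsScalarTower A K L]
    [IsIntegralClosure B A L] [IsDomain B]

include K L in
lemma cardQuotMapPrime (p : Ideal A) [p.IsMaximal] [Finite (A ⧸ p)] :
    Nat.card (B ⧸ Ideal.map (algebraMap A B) p) = Nat.card (A ⧸ p) ^ Module.finrank K L := by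
  haveI : IsNoetherian A B := IsIntegralClosure.isNoetherian A K L B
  haveI : Module.Finite A B := Module.IsNoetherian.finite A B
  haveI : IsFractionRing B L := IsIntegralClosure.isFractionRing_of_finite_extension A K L B
  letI : Field (A ⧸ p) := Ideal.Quotient.field p
  haveI : Module.Finite (A ⧸ p) (B ⧸ Ideal.map (algebraMap A B) p) :=
    Module.IsNoetherian.finite _ _
  haveI : Finite (B ⧸ Ideal.map (algebraMap A B) p) := Module.finite_of_finite (A ⧸ p)
  letI : Fintype (A ⧸ p) := Fintype.ofFinite _
  letI : Fintype (B ⧸ Ideal.map (algebraMap A B) p) := Fintype.ofFinite _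
  rw [Nat.card_eq_fintype_card, Nat.card_eq_fintype_card, card_eq_pow_finrank (K := A ⧸ p),
    Ideal.finrank_quotient_map p K L]

include K L in
lemma cardQuotPrimeOver (p : Ideal A) [p.IsMaximal] [Finite (A ⧸ p)] (P : Ideal B)
    (hcomap : Ideal.comap (algebraMap A B) P = p) :
    Nat.card (B ⧸ P) = Nat.card (A ⧸ p) ^ Ideal.inertiaDeg' p P := by
  haveI : IsNoetherian A B := IsIntegralClosure.isNoetherian A K L B
  haveI : Module.Finite A B := Module.IsNoetherian.finite A B
  rw [Ideal.inertiaDeg', dif_pos hcomap]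
  letI : Field (A ⧸ p) := Ideal.Quotient.field p
  letI : Algebra (A ⧸ p) (B ⧸ P) :=
    Ideal.Quotient.algebraQuotientOfLEComap (le_of_eq hcomap.symm)
  haveI : IsScalarTower A (A ⧸ p) (B ⧸ P) := IsScalarTower.of_algebraMap_eq fun x => rfl
  haveI : Module.Finite A (B ⧸ P) :=
    Module.Finite.of_surjective (Ideal.Quotient.mkₐ A P).toLinearMap
      (Ideal.Quotient.mkₐ_surjective A P)
  haveI : Module.Finite (A ⧸ p) (B ⧸ P) :=
    Module.Finite.of_restrictScalars_finite A (A ⧸ p) (B ⧸ P)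
  haveI : Finite (B ⧸ P) := Module.finite_of_finite (A ⧸ p)
  letI : Fintype (A ⧸ p) := Fintype.ofFinite _
  letI : Fintype (B ⧸ P) := Fintype.ofFinite _
  rw [Nat.card_eq_fintype_card, Nat.card_eq_fintype_card, card_eq_pow_finrank (K := A ⧸ p)]

end Cards
lemma mapFinsetProd {R S ι : Type*} [CommRing R] [CommRing S] (f : R →+* S) (s : Finset ι)
    (I : ι → Ideal R) :
    Ideal.map f (∏ i ∈ s, I i) = ∏ i ∈ s, Ideal.map f (I i) := by
  classical
  induction s using Finset.cons_induction with
  | empty => simp only [Finset.prod_empty, Ideal.one_eq_top, Ideal.map_top]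
  | cons a s ha ih => rw [Finset.prod_cons, Finset.prod_cons, Ideal.map_mul, ih]

/-- Behavior of Carmichael ideals in extensions of Dedekind domains: let `A` be a Dedekind
domain with fraction field `K`, `L/K` finite separable of degree `d`, and `B` the integral
closure of `A` in `L` (a Dedekind domain). Let `n` be a squarefree ideal of `A` with finite
residue ring. Then `nB` is a Carmichael ideal of `B` if and only if
(1) `nB` is composite (not prime, nonzero, proper),
(2) every prime dividing `n` is unramified in `L` (equivalently, `n` is coprime to the
discriminant, i.e. `nB` is squarefree), and
(3) for each prime `p ∣ n` and each prime `P` of `B` above `p`,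
`N_K(p)^{f(P)} - 1 ∣ N_K(n)^d - 1`, where `f(P)` is the residue degree. -/
theorem carmichael_ideal_extension (A K L B : Type)
    [CommRing A] [IsDedekindDomain A] [Field K] [Field L] [CommRing B]
    [Algebra A K] [IsFractionRing A K] [Algebra K L] [FiniteDimensional K L]
    [Algebra.IsSeparable K L]
    [Algebra A B] [Algebra B L] [Algebra A L] [IsScalarTower A B L] [IsScalarTower A K L]
    [IsIntegralClosure B A L]
    (n : Ideal A) (hbot : n ≠ ⊥) (htop : n ≠ ⊤) (hsf : Squarefree n) (hfin : Finite (A ⧸ n)) :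
    ((¬(Ideal.map (algebraMap A B) n).IsPrime ∧ Ideal.map (algebraMap A B) n ≠ ⊥ ∧
        Ideal.map (algebraMap A B) n ≠ ⊤) ∧
      ∀ β : B, β ^ Nat.card (B ⧸ Ideal.map (algebraMap A B) n) - β ∈
        Ideal.map (algebraMap A B) n) ↔
    ((¬(Ideal.map (algebraMap A B) n).IsPrime ∧ Ideal.map (algebraMap A B) n ≠ ⊥ ∧
        Ideal.map (algebraMap A B) n ≠ ⊤) ∧
      Squarefree (Ideal.map (algebraMap A B) n) ∧
      ∀ p : Ideal A, p.IsPrime → p ∣ n →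
        ∀ P : Ideal B, P.IsPrime → Ideal.comap (algebraMap A B) P = p →
          Nat.card (A ⧸ p) ^ (Ideal.inertiaDeg' p P) - 1 ∣
            Nat.card (A ⧸ n) ^ Module.finrank K L - 1) := by
  classical
  haveI : IsDomain B :=
    Function.Injective.isDomain (algebraMap B L) (IsIntegralClosure.algebraMap_injective B A L)
  haveI : IsDedekindDomain B := IsIntegralClosure.isDedekindDomain A K L B
  haveI : IsNoetherian A B := IsIntegralClosure.isNoetherian A K L B
  haveI : Module.Finite A B := Module.IsNoetherian.finite A B
  have hinj : Function.Injective (algebraMap A B) := by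
    have h1 : Function.Injective (algebraMap A L) := by
      rw [IsScalarTower.algebraMap_eq A K L]
      exact (algebraMap K L).injective.comp (IsFractionRing.injective A K)
    rw [IsScalarTower.algebraMap_eq A B L] at h1
    exact Function.Injective.of_comp h1
  have hIbot : Ideal.map (algebraMap A B) n ≠ ⊥ := by
    rw [Ne, Ideal.map_eq_bot_iff_of_injective hinj]; exact hbot
  haveI : Module.Finite A (B ⧸ Ideal.map (algebraMap A B) n) :=
    Module.Finite.of_surjective (Ideal.Quotient.mkₐ A _).toLinearMap
      (Ideal.Quotient.mkₐ_surjective A _)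
  haveI : Module.Finite (A ⧸ n) (B ⧸ Ideal.map (algebraMap A B) n) :=
    Module.Finite.of_restrictScalars_finite A (A ⧸ n) (B ⧸ Ideal.map (algebraMap A B) n)
  haveI : Finite (B ⧸ Ideal.map (algebraMap A B) n) := Module.finite_of_finite (A ⧸ n)
  -- the cardinality of `B ⧸ nB`
  have hcard : Nat.card (B ⧸ Ideal.map (algebraMap A B) n) =
      Nat.card (A ⧸ n) ^ Module.finrank K L := by
    have hprodn := sf_prod hbot hsf
    have hmap : Ideal.map (algebraMap A B) n =
        ∏ p ∈ (UniqueFactorizationMonoid.normalizedFactors n).toFinset,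
          Ideal.map (algebraMap A B) p := by
      conv_lhs => rw [← hprodn]
      exact mapFinsetProd _ _ _
    have hAcard : Nat.card (A ⧸ n) =
        ∏ p ∈ (UniqueFactorizationMonoid.normalizedFactors n).toFinset, Nat.card (A ⧸ p) := by
      conv_lhs => rw [← hprodn]
      exact cardQuotProd _ id factors_pairwise_coprime
    have hBcard : Nat.card (B ⧸ Ideal.map (algebraMap A B) n) =
        ∏ p ∈ (UniqueFactorizationMonoid.normalizedFactors n).toFinset,
          Nat.card (B ⧸ Ideal.map (algebraMap A B) p) := by
      rw [hmap]
      refine cardQuotProd _ _ fun P hP Q hQ hne => ?_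
      have h2 := factors_pairwise_coprime (I := n) hP hQ hne
      simp only [Function.onFun, id] at h2 ⊢
      rw [Ideal.isCoprime_iff_sup_eq] at h2 ⊢
      rw [← Ideal.map_sup, h2, Ideal.map_top]
    have hfac : ∀ p ∈ (UniqueFactorizationMonoid.normalizedFactors n).toFinset,
        Nat.card (B ⧸ Ideal.map (algebraMap A B) p) = Nat.card (A ⧸ p) ^ Module.finrank K L := by
      intro p hp
      rw [Multiset.mem_toFinset] at hp
      have hpp : Prime p := UniqueFactorizationMonoid.prime_of_normalized_factor _ hp
      haveI : p.IsMaximal := (Ideal.isPrime_of_prime hpp).isMaximal hpp.ne_zero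
      haveI : Finite (A ⧸ p) :=
        quotFinite (Ideal.le_of_dvd (UniqueFactorizationMonoid.dvd_of_mem_normalizedFactors hp))
      exact cardQuotMapPrime A K L B p
    rw [hBcard, Finset.prod_congr rfl hfac, Finset.prod_pow, ← hAcard]
  refine and_congr_right fun hcomp => ?_
  obtain ⟨-, -, hItop⟩ := hcomp
  rw [korselt hIbot hItop]
  refine and_congr_right fun hsfB => ?_
  constructor
  · intro hforall p hp hpn P hPp hcomap
    have hpbot : p ≠ ⊥ := fun e => hbot (le_bot_iff.mp (e ▸ Ideal.le_of_dvd hpn))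
    haveI : p.IsMaximal := hp.isMaximal hpbot
    haveI : Finite (A ⧸ p) := quotFinite (Ideal.le_of_dvd hpn)
    have hle : Ideal.map (algebraMap A B) n ≤ P :=
      le_trans (Ideal.map_mono (Ideal.le_of_dvd hpn))
        (Ideal.map_le_iff_le_comap.mpr (le_of_eq hcomap.symm))
    have h3 := hforall P hPp hle
    rwa [hcard, cardQuotPrimeOver A K L B p P hcomap] at h3
  · intro hdiv P hPp hle
    haveI := hPp
    have hcp : (Ideal.comap (algebraMap A B) P).IsPrime := Ideal.IsPrime.comap _
    have hnle : n ≤ Ideal.comap (algebraMap A B) P :=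
      le_trans Ideal.le_comap_map (Ideal.comap_mono hle)
    have hpn : Ideal.comap (algebraMap A B) P ∣ n := Ideal.dvd_iff_le.mpr hnle
    have hpbot : Ideal.comap (algebraMap A B) P ≠ ⊥ := fun e => hbot (le_bot_iff.mp (e ▸ hnle))
    haveI : (Ideal.comap (algebraMap A B) P).IsMaximal := hcp.isMaximal hpbot
    haveI : Finite (A ⧸ Ideal.comap (algebraMap A B) P) := quotFinite hnle
    have h3 := hdiv (Ideal.comap (algebraMap A B) P) hcp hpn P hPp rfl
    rwa [hcard, cardQuotPrimeOver A K L B (Ideal.comap (algebraMap A B) P) P rfl]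
end

section
/- Let u ∈ F_q[t] be a squarefree nonconstant polynomial. Then there exist infinitely many squarefree monic polynomials w ∈ F_q[t] coprime to u such that uw is a Carmichael polynomial; in particular, every squarefree polynomial divides infinitely many Carmichael polynomials. -/
open Polynomial

noncomputable section CarmichaelAux

theorem carmichael_aux_finrank (F : Type) [Field F] [Fintype F] (n : ℕ) (h : n ≠ 0) :
    Module.finrank F (SplittingField (X ^ (Fintype.card F) ^ n - X : F[X])) = n := by
  set q := Fintype.card F with hq
  set K := SplittingField (X ^ q ^ n - X : F[X]) with hK
  haveI : Finite K := Module.finite_of_finite F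
  haveI : Fintype K := Fintype.ofFinite K
  set g_poly := (X ^ q ^ n - X : F[X]) with hg
  have hp : 1 < q := Fintype.one_lt_card
  obtain ⟨p, hchar⟩ := CharP.exists F
  haveI := hchar
  obtain ⟨nn, hpprime, hcard⟩ := FiniteField.card F p
  haveI : Fact p.Prime := ⟨hpprime⟩
  haveI : CharP K p := charP_of_injective_algebraMap' F p
  obtain ⟨k, hk⟩ : ∃ k : ℕ, q ^ n = p ^ k := ⟨nn * n, by rw [hq, hcard, ← pow_mul]⟩
  have aux : g_poly ≠ 0 := FiniteField.X_pow_card_pow_sub_X_ne_zero _ h hp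
  have hpq : p ∣ q ^ n := by
    refine dvd_trans ?_ (dvd_pow_self q h)
    rw [hq, hcard]; exact dvd_pow_self p nn.ne_zero
  have key : Fintype.card (g_poly.rootSet K) = g_poly.natDegree :=
    card_rootSet_eq_natDegree (galois_poly_separable p _ hpq)
      (SplittingField.splits g_poly)
  have nat_degree_eq : g_poly.natDegree = q ^ n :=
    FiniteField.X_pow_card_pow_sub_X_natDegree_eq _ h hp
  rw [nat_degree_eq] at key
  suffices hs : g_poly.rootSet K = Set.univ by
    simp_rw [hs, ← Fintype.ofEquiv_card (Equiv.Set.univ _)] at key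
    rw [@Module.card_eq_pow_finrank F K _ _ _ _ (_)] at key
    exact Nat.pow_right_injective hp key
  rw [Set.eq_univ_iff_forall]
  suffices ∀ (x) (_ : x ∈ (⊤ : Subalgebra F K)), x ∈ g_poly.rootSet K by simpa
  rw [← SplittingField.adjoin_rootSet]
  simp_rw [Algebra.mem_adjoin_iff]
  intro x hx
  refine Subring.closure_induction ?_ ?_ ?_ ?_ ?_ ?_ hx <;> simp_rw [mem_rootSet_of_ne aux]
  · rintro x (⟨r, rfl⟩ | hx)
    · simp only [g_poly, map_sub, map_pow, aeval_X]
      rw [← map_pow, FiniteField.pow_card_pow, sub_self]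
    · rwa [mem_rootSet_of_ne aux] at hx
  · rw [← coeff_zero_eq_aeval_zero']
    simp only [g_poly, coeff_X_pow, coeff_X_zero, sub_zero, _root_.map_eq_zero, ite_eq_right_iff,
      one_ne_zero, coeff_sub]
    intro hn
    exact absurd (eq_zero_of_pow_eq_zero hn.symm) (by positivity)
  · simp [g_poly]
  · simp only [g_poly, aeval_X_pow, aeval_X, map_sub, hk, add_pow_char_pow, sub_eq_zero]
    intro x y _ _ hx hy
    rw [hx, hy]
  · intro x _ hx
    simp only [g_poly, sub_eq_zero, aeval_X_pow, aeval_X, map_sub, sub_neg_eq_add, hk] at *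
    rw [neg_pow, hx, neg_one_pow_char_pow]
    ring
  · simp only [g_poly, aeval_X_pow, aeval_X, map_sub, mul_pow, sub_eq_zero]
    intro x y _ _ hx hy
    rw [hx, hy]

open IntermediateField in
/-- Over any finite field there is a monic irreducible polynomial of each degree `n ≠ 0`. -/
theorem carmichael_aux_exists_monic_irred (F : Type) [Field F] [Fintype F] (n : ℕ) (h : n ≠ 0) :
    ∃ P : F[X], P.Monic ∧ Irreducible P ∧ P.natDegree = n := by
  set K := SplittingField (X ^ (Fintype.card F) ^ n - X : F[X]) with hK
  haveI : Finite K := Module.finite_of_finite F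
  obtain ⟨α, hα⟩ := Field.exists_primitive_element_of_finite_top F K
  refine ⟨minpoly F α, minpoly.monic (IsIntegral.of_finite F α),
    minpoly.irreducible (IsIntegral.of_finite F α), ?_⟩
  have h1 : Module.finrank F F⟮α⟯ = (minpoly F α).natDegree :=
    IntermediateField.adjoin.finrank (IsIntegral.of_finite F α)
  rw [hα] at h1
  rw [← h1, IntermediateField.finrank_top']
  exact carmichael_aux_finrank F n h

lemma carmichael_aux_bin_rep :
    ∀ k m : ℕ, m < 2 ^ k → ∃ s : Finset ℕ, s ⊆ Finset.range k ∧ ∑ j ∈ s, 2 ^ j = m := by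
  intro k
  induction k with
  | zero => intro m hm; interval_cases m; exact ⟨∅, by simp⟩
  | succ k ih =>
    intro m hm
    by_cases h : m < 2 ^ k
    · obtain ⟨s, hs, hsum⟩ := ih m h
      exact ⟨s, hs.trans (Finset.range_subset_range.mpr (Nat.le_succ k)), hsum⟩
    · push_neg at h
      obtain ⟨s, hs, hsum⟩ := ih (m - 2 ^ k) (by rw [pow_succ] at hm; omega)
      refine ⟨insert k s, ?_, ?_⟩
      · intro x hx
        rcases Finset.mem_insert.mp hx with rfl | hx
        · exact Finset.self_mem_range_succ x
        · exact Finset.range_subset_range.mpr (Nat.le_succ k) (hs hx)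
      · rw [Finset.sum_insert (fun hk => by have := hs hk; simp at this), hsum]
        omega

lemma carmichael_aux_bin_rep_even (k m : ℕ) (hm : m < 2 ^ k) (he : Even m) :
    ∃ s : Finset ℕ, s ⊆ Finset.Ico 1 (k + 1) ∧ ∑ j ∈ s, 2 ^ j = m := by
  obtain ⟨m', rfl⟩ := he
  have hm' : m' < 2 ^ k := by omega
  obtain ⟨s, hs, hsum⟩ := carmichael_aux_bin_rep k m' hm'
  refine ⟨s.image (· + 1), ?_, ?_⟩
  · intro x hx
    obtain ⟨j, hj, rfl⟩ := Finset.mem_image.mp hx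
    have := Finset.mem_range.mp (hs hj)
    simp only [Finset.mem_Ico]; omega
  · rw [Finset.sum_image (by intro a _ b _ h; simp only at h; omega)]
    simp only [pow_succ]
    rw [← Finset.sum_mul, hsum]
    omega

/-- A product of monic irreducible polynomials of pairwise distinct degrees is squarefree. -/
lemma carmichael_aux_squarefree_prod {F : Type} [Field F] (S : Finset ℕ) (P : ℕ → F[X]) :
    (∀ m ∈ S, (P m).Monic) → (∀ m ∈ S, Irreducible (P m)) → (∀ m ∈ S, (P m).natDegree = m) →
    Squarefree (∏ m ∈ S, P m) := by
  classical
  induction S using Finset.induction_on with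
  | empty => intros; rw [Finset.prod_empty]; exact squarefree_one
  | @insert a S ha ih =>
    intro hmon hirr hdeg
    rw [Finset.prod_insert ha, squarefree_mul_iff]
    have hins : ∀ m ∈ S, m ∈ insert a S := fun m hm => Finset.mem_insert_of_mem hm
    have hane : ∀ m ∈ S, ¬ P (a) ∣ P m := by
      intro m hm hdvd
      have hassoc := (hirr a (Finset.mem_insert_self a S)).associated_of_dvd
        (hirr m (hins m hm)) hdvd
      have heq := Polynomial.eq_of_monic_of_associated
        (hmon a (Finset.mem_insert_self a S)) (hmon m (hins m hm)) hassoc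
      have : a = m := by
        rw [← hdeg a (Finset.mem_insert_self a S), ← hdeg m (hins m hm), heq]
      exact ha (this ▸ hm)
    refine ⟨IsCoprime.isRelPrime ?_, (hirr a (Finset.mem_insert_self a S)).squarefree,
      ih (fun m hm => hmon m (hins m hm)) (fun m hm => hirr m (hins m hm))
        (fun m hm => hdeg m (hins m hm))⟩
    exact IsCoprime.prod_right fun m hm =>
      ((hirr a (Finset.mem_insert_self a S)).coprime_iff_not_dvd).mpr (hane m hm)

end CarmichaelAux

/-- Every squarefree nonconstant polynomial `u ∈ F_q[t]` divides infinitely many Carmichael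
polynomials: there are infinitely many squarefree monic `w` coprime to `u` such that `u * w`
is a Carmichael polynomial. -/
theorem squarefree_divides_infinitely_many_carmichael (F : Type) [Field F] [Fintype F]
    (u : F[X]) (hu : Squarefree u) (hdeg : 0 < u.natDegree) :
    ∀ N : ℕ, ∃ w : F[X], w.Monic ∧ Squarefree w ∧ IsCoprime u w ∧
      IsCarmichaelPoly (u * w) ∧ N ≤ w.natDegree := by
  intro N
  classical
  set d := u.natDegree with hd
  have hu0 : u ≠ 0 := hu.ne_zero
  have hd1 : 1 ≤ d := hdeg
  -- the odd part `D'` of `(Nat.factorial d)`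
  set s := ((Nat.factorial d)).factorization 2 with hs
  set D' := ((Nat.factorial d)) / 2 ^ s with hD'
  have hfact : 2 ^ s * D' = (Nat.factorial d) := Nat.ordProj_mul_ordCompl_eq_self ((Nat.factorial d)) 2
  have hD'odd : ¬ 2 ∣ D' := Nat.not_dvd_ordCompl Nat.prime_two (Nat.factorial_ne_zero d)
  have hD'pos : 0 < D' := Nat.ordCompl_pos 2 (Nat.factorial_ne_zero d)
  set c := 3 * D' with hc
  have hcodd : ¬ 2 ∣ c := by
    intro h
    rcases (Nat.Prime.dvd_mul Nat.prime_two).mp h with h | h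
    · omega
    · exact hD'odd h
  have hc3 : 3 ≤ c := by
    calc (3 : ℕ) = 3 * 1 := by norm_num
    _ ≤ 3 * D' := by exact Nat.mul_le_mul_left 3 hD'pos
  set k := s + (c + N + 1) with hk
  set n := d * c * 2 ^ k with hn
  -- binary representation of `c - 1` with positive exponents
  obtain ⟨b, hbsub, hbsum⟩ : ∃ b : Finset ℕ, b ⊆ Finset.Ico 1 (c + 1) ∧
      ∑ j ∈ b, 2 ^ j = c - 1 := by
    refine carmichael_aux_bin_rep_even c (c - 1) (by have := Nat.lt_two_pow_self (n := c); omega) ?_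
    obtain ⟨t, ht⟩ : 2 ∣ c - 1 := by omega
    exact ⟨t, by omega⟩
  have hck : c + 1 ≤ k := by omega
  -- the set of degrees
  set S : Finset ℕ := ((Finset.range k).image fun j => d * c * 2 ^ j) ∪
      (b.image fun j => d * 2 ^ j) with hS
  have hmemS : ∀ m ∈ S, d < m ∧ m ∣ n := by
    intro m hm
    rcases Finset.mem_union.mp hm with hm | hm
    · obtain ⟨j, hj, rfl⟩ := Finset.mem_image.mp hm
      have hjk : j < k := Finset.mem_range.mp hj
      constructor
      · have h1 : 1 ≤ 2 ^ j := Nat.one_le_two_pow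
        have h3 := Nat.mul_le_mul (Nat.mul_le_mul (le_refl d) hc3) h1
        omega
      · exact mul_dvd_mul_left (d * c) (pow_dvd_pow 2 hjk.le)
    · obtain ⟨j, hj, rfl⟩ := Finset.mem_image.mp hm
      have hj1 : 1 ≤ j ∧ j < c + 1 := Finset.mem_Ico.mp (hbsub hj)
      constructor
      · have h2 : 2 ≤ 2 ^ j := by
          calc (2:ℕ) = 2 ^ 1 := (pow_one 2).symm
          _ ≤ 2 ^ j := Nat.pow_le_pow_right (by norm_num) hj1.1
        have h3 := Nat.mul_le_mul (le_refl d) h2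
        omega
      · rw [hn]
        have h1 : 2 ^ j ∣ 2 ^ k := pow_dvd_pow 2 (by omega)
        calc d * 2 ^ j ∣ d * 2 ^ k := mul_dvd_mul_left d h1
        _ ∣ d * c * 2 ^ k := ⟨c, by ring⟩
  -- the two families of degrees are disjoint
  have hdisj : Disjoint ((Finset.range k).image fun j => d * c * 2 ^ j)
      (b.image fun j => d * 2 ^ j) := by
    rw [Finset.disjoint_left]
    rintro x hx1 hx2
    obtain ⟨i, _, rfl⟩ := Finset.mem_image.mp hx1
    obtain ⟨j, hj, hij⟩ := Finset.mem_image.mp hx2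
    have hij' : c * 2 ^ i = 2 ^ j := by
      have h : d * (c * 2 ^ i) = d * 2 ^ j := by rw [hij]; ring
      exact Nat.eq_of_mul_eq_mul_left (by omega) h
    have hcd : c ∣ 2 ^ j := ⟨2 ^ i, hij'.symm⟩
    have hcop : Nat.Coprime c 2 := Nat.coprime_comm.mp
      (Nat.Prime.coprime_iff_not_dvd Nat.prime_two |>.mpr hcodd)
    have := Nat.eq_one_of_dvd_coprimes (hcop.pow_right j) (dvd_refl c) hcd
    omega
  -- the sum of the degrees
  have hgeo : ∀ K : ℕ, ∑ j ∈ Finset.range K, 2 ^ j = 2 ^ K - 1 := by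
    intro K
    induction K with
    | zero => simp
    | succ K ih => rw [Finset.sum_range_succ, ih]; have := Nat.one_le_two_pow (n := K); omega
  have hsumS : d + ∑ m ∈ S, m = n := by
    rw [hS, Finset.sum_union hdisj]
    rw [Finset.sum_image (fun a _ a' _ h => by
      have h' : 2 ^ a = 2 ^ a' :=
        Nat.eq_of_mul_eq_mul_left (Nat.mul_pos (by omega) (by omega)) h
      exact Nat.pow_right_injective (le_refl 2) h')]
    rw [Finset.sum_image (fun a _ a' _ h => by
      have h' : 2 ^ a = 2 ^ a' := Nat.eq_of_mul_eq_mul_left (by omega) h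
      exact Nat.pow_right_injective (le_refl 2) h')]
    have h1 : ∑ j ∈ Finset.range k, d * c * 2 ^ j = d * c * (2 ^ k - 1) := by
      rw [← Finset.mul_sum, hgeo]
    have h2 : ∑ j ∈ b, d * 2 ^ j = d * (c - 1) := by
      rw [← Finset.mul_sum, hbsum]
    rw [h1, h2, hn]
    obtain ⟨x, hx⟩ : ∃ x, 2 ^ k = x + 1 :=
      ⟨2 ^ k - 1, by have := Nat.one_le_two_pow (n := k); omega⟩
    obtain ⟨c', hc'⟩ : ∃ c', c = c' + 1 := ⟨c - 1, by omega⟩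
    rw [hx, hc']
    simp only [Nat.add_sub_cancel]
    ring
  -- choose monic irreducibles of each degree
  have hex : ∀ m : ℕ, ∃ P : F[X], P.Monic ∧ P.natDegree = m ∧ (m ≠ 0 → Irreducible P) := by
    intro m
    rcases eq_or_ne m 0 with rfl | h
    · exact ⟨1, monic_one, natDegree_one, by simp⟩
    · obtain ⟨P, h1, h2, h3⟩ := carmichael_aux_exists_monic_irred F m h
      exact ⟨P, h1, h3, fun _ => h2⟩
  choose P hPmon hPdeg hPirr using hex
  set w := ∏ m ∈ S, P m with hw
  have hirrS : ∀ m ∈ S, Irreducible (P m) := fun m hm =>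
    hPirr m (by have := (hmemS m hm).1; omega)
  have hwmonic : w.Monic := monic_prod_of_monic _ _ fun m _ => hPmon m
  have hw0 : w ≠ 0 := hwmonic.ne_zero
  have hE : n = d * (c * 2 ^ k) := by rw [hn]; ring
  have hdn : d < n := by
    have hA : 3 * 1 ≤ c * 2 ^ k := Nat.mul_le_mul hc3 Nat.one_le_two_pow
    have hB := Nat.mul_le_mul (le_refl d) hA
    omega
  have hwdeg : d + w.natDegree = n := by
    rw [hw, natDegree_prod _ _ fun m _ => (hPmon m).ne_zero]
    simp_rw [hPdeg]
    exact hsumS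
  have hcop : IsCoprime u w := by
    refine IsCoprime.prod_right fun m hm => ?_
    have hnd : ¬ P m ∣ u := by
      intro hdvd
      have h1 : (P m).natDegree ≤ d := natDegree_le_of_dvd hdvd hu0
      rw [hPdeg] at h1
      exact absurd h1 (not_le.mpr (hmemS m hm).1)
    exact (((hirrS m hm).coprime_iff_not_dvd).mpr hnd).symm
  have hsqw : Squarefree w := carmichael_aux_squarefree_prod S P
    (fun m _ => hPmon m) hirrS (fun m _ => hPdeg m)
  have huwdeg : (u * w).natDegree = n := by
    rw [natDegree_mul hu0 hw0, ← hd]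
    exact hwdeg
  refine ⟨w, hwmonic, hsqw, hcop, ⟨?_, ?_, ?_, ?_⟩, ?_⟩
  · rw [squarefree_mul_iff]
    exact ⟨hcop.isRelPrime, hu, hsqw⟩
  · intro hirred
    rcases hirred.isUnit_or_isUnit rfl with h | h
    · exact not_isUnit_of_natDegree_pos u hdeg h
    · exact not_isUnit_of_natDegree_pos w (by omega) h
  · rw [huwdeg]; omega
  · intro Q hQmon hQirr hQdvd
    rw [huwdeg]
    rcases (hQirr.prime).2.2 u w hQdvd with h | h
    · -- Q divides u : its degree divides (Nat.factorial d) which divides n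
      have h1 : Q.natDegree ≤ d := natDegree_le_of_dvd h hu0
      have h2 : 0 < Q.natDegree := hQirr.natDegree_pos
      have h3 : Q.natDegree ∣ (Nat.factorial d) := Nat.dvd_factorial h2 h1
      refine h3.trans ?_
      refine ⟨3 * d * 2 ^ (c + N + 1), ?_⟩
      rw [← hfact, hn, hk, hc, pow_add]
      ring
    · -- Q divides w : Q equals one of the P m, and m ∣ n
      obtain ⟨m, hm, hdvd⟩ := (hQirr.prime).exists_mem_finset_dvd h
      have hassoc := hQirr.associated_of_dvd (hirrS m hm) hdvd
      have heq := Polynomial.eq_of_monic_of_associated hQmon (hPmon m) hassoc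
      rw [heq, hPdeg]
      exact (hmemS m hm).2
  · have h1 : k < 2 ^ k := Nat.lt_two_pow_self
    have hC : N + 2 ≤ c * 2 ^ k := by
      have h2 : 2 ^ k ≤ c * 2 ^ k := Nat.le_mul_of_pos_left _ (by omega)
      omega
    have h5 : d * (c * 2 ^ k) = (d - 1) * (c * 2 ^ k) + 1 * (c * 2 ^ k) := by
      have hd' : d - 1 + 1 = d := by omega
      rw [← Nat.add_mul, hd']
    have h6 : (d - 1) * 1 ≤ (d - 1) * (c * 2 ^ k) := Nat.mul_le_mul (le_refl _) (by omega)
    omega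
end
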